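/- arXiv:2208.06514 — 14 statements merged into one kernel-verified Lean document; each statement's English description precedes it below -/
import Mathlib

section
/- Let T > 0 and let λ, x, y : [0,T) → ℝ be differentiable functions solving the Wang ODE system, with y(t) > 0 for all t ∈ [0,T). Then the quantities x(t)/y(t)³ and λ(t) + (4/3)·x(t) are constant on [0,T); that is, for all t ∈ [0,T) one has x(t)/y(t)³ = x(0)/y(0)³ and λ(t) + (4/3)·x(t) = λ(0) + (4/3)·x(0). -/
open Set

/-- Conservation laws for the Wang ODE system: if `λ, x, y` solve
`λ' = 8x/(x²+y²)`, `x' = −6x/(x²+y²)`, `y' = −2y/(x²+y²)` on `[0,T)` with `y > 0`,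
then `x/y³` and `λ + (4/3)x` are constant on `[0,T)`. -/
theorem wang_ode_conserved (T : ℝ) (hT : 0 < T) (lam x y : ℝ → ℝ)
    (hypos : ∀ t ∈ Ico (0:ℝ) T, 0 < y t)
    (hlam : ∀ t ∈ Ico (0:ℝ) T,
      HasDerivAt lam (8 * x t / (x t ^ 2 + y t ^ 2)) t)
    (hx : ∀ t ∈ Ico (0:ℝ) T,
      HasDerivAt x (-6 * x t / (x t ^ 2 + y t ^ 2)) t)
    (hy : ∀ t ∈ Ico (0:ℝ) T,
      HasDerivAt y (-2 * y t / (x t ^ 2 + y t ^ 2)) t) :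
    ∀ t ∈ Ico (0:ℝ) T,
      x t / (y t) ^ 3 = x 0 / (y 0) ^ 3 ∧
      lam t + (4/3) * x t = lam 0 + (4/3) * x 0 := by
  -- helper facts
  have hs : ∀ t ∈ Ico (0:ℝ) T, x t ^ 2 + y t ^ 2 ≠ 0 := by
    intro t ht
    have := hypos t ht
    positivity
  have hyne : ∀ t ∈ Ico (0:ℝ) T, y t ≠ 0 := fun t ht => (hypos t ht).ne'
  -- derivative of x/y³ is zero
  have hf : ∀ t ∈ Ico (0:ℝ) T, HasDerivAt (fun t => x t / (y t) ^ 3) 0 t := by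
    intro t ht
    have h1 : HasDerivAt (fun t => (y t) ^ 3)
        (3 * y t ^ 2 * (-2 * y t / (x t ^ 2 + y t ^ 2))) t := by
      have := (hy t ht).fun_pow 3
      simpa [mul_comm, mul_assoc, mul_left_comm] using this
    have h2 := (hx t ht).fun_div h1 (pow_ne_zero 3 (hyne t ht))
    refine h2.congr_deriv ?_
    field_simp [hs t ht, hyne t ht]
    ring
  -- derivative of lam + (4/3)x is zero
  have hg : ∀ t ∈ Ico (0:ℝ) T, HasDerivAt (fun t => lam t + (4/3) * x t) 0 t := by
    intro t ht
    have h2 := (hlam t ht).fun_add ((hx t ht).const_mul (4/3 : ℝ))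
    refine h2.congr_deriv ?_
    field_simp [hs t ht]
    ring
  -- constancy on [0, t]
  intro t ht
  obtain ⟨ht0, htT⟩ := ht
  have hsub : Icc (0:ℝ) t ⊆ Ico (0:ℝ) T := fun s hs =>
    ⟨hs.1, lt_of_le_of_lt hs.2 htT⟩
  have key : ∀ (f : ℝ → ℝ), (∀ s ∈ Ico (0:ℝ) T, HasDerivAt f 0 s) → f t = f 0 := by
    intro f hf'
    have hcont : ContinuousOn f (Icc 0 t) := fun s hsI =>
      ((hf' s (hsub hsI)).continuousAt).continuousWithinAt
    have hderiv : ∀ s ∈ Ico (0:ℝ) t, HasDerivWithinAt f 0 (Ici s) s := by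
      intro s hsI
      exact ((hf' s (hsub ⟨hsI.1, le_of_lt hsI.2⟩)).hasDerivWithinAt)
    exact constant_of_has_deriv_right_zero hcont hderiv t (right_mem_Icc.mpr ht0)
  exact ⟨key _ hf, key _ hg⟩
end

section
/- Let T > 0 and let λ, x, y : [0,T] → ℝ be differentiable functions solving the Wang ODE system, with y(t) > 0 for all t ∈ [0,T]. Then the Loewner energy expelled up to time T satisfies (1/2)·∫₀ᵀ λ'(t)² dt = 8·log( y(T)/√(x(T)²+y(T)²) ) − 8·log( y(0)/√(x(0)²+y(0)²) ). In particular, if x(0) = cos θ and y(0) = sin θ for θ ∈ (0,π), the energy used up to time T equals −8·log(sin θ) + 8·log(sin θ(T)) where θ(T) = arg(x(T)+iy(T)). -/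
open Set

/-- Energy formula for the Wang ODE system: the Loewner energy
expelled up to time `T` is `8 log(y(T)/√(x(T)²+y(T)²)) − 8 log(y(0)/√(x(0)²+y(0)²))`.
In particular, with initial data `(cos θ, sin θ)`, this energy equals
`−8 log(sin θ) + 8 log(sin θ(T))` where `θ(T) = arg(x(T)+iy(T))`. -/
theorem wang_ode_energy (T : ℝ) (hT : 0 < T) (lam x y : ℝ → ℝ)
    (hypos : ∀ t ∈ Icc (0:ℝ) T, 0 < y t)
    (hlam : ∀ t ∈ Icc (0:ℝ) T,
      HasDerivAt lam (8 * x t / (x t ^ 2 + y t ^ 2)) t)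
    (hx : ∀ t ∈ Icc (0:ℝ) T,
      HasDerivAt x (-6 * x t / (x t ^ 2 + y t ^ 2)) t)
    (hy : ∀ t ∈ Icc (0:ℝ) T,
      HasDerivAt y (-2 * y t / (x t ^ 2 + y t ^ 2)) t) :
    (1/2) * (∫ t in (0:ℝ)..T, (deriv lam t) ^ 2) =
        8 * Real.log (y T / Real.sqrt (x T ^ 2 + y T ^ 2)) -
        8 * Real.log (y 0 / Real.sqrt (x 0 ^ 2 + y 0 ^ 2)) ∧
      ∀ θ ∈ Ioo (0:ℝ) Real.pi, x 0 = Real.cos θ → y 0 = Real.sin θ →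
        (1/2) * (∫ t in (0:ℝ)..T, (deriv lam t) ^ 2) =
          -8 * Real.log (Real.sin θ) +
          8 * Real.log (Real.sin (Complex.arg ((x T : ℂ) + (y T : ℂ) * Complex.I))) := by
  have huIcc : uIcc (0:ℝ) T = Icc 0 T := uIcc_of_le hT.le
  have h0T : (0:ℝ) ∈ Icc (0:ℝ) T := ⟨le_refl _, hT.le⟩
  have hTm : T ∈ Icc (0:ℝ) T := ⟨hT.le, le_refl _⟩
  have hr : ∀ t ∈ Icc (0:ℝ) T, 0 < x t ^ 2 + y t ^ 2 := fun t ht =>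
    add_pos_of_nonneg_of_pos (sq_nonneg _) (pow_pos (hypos t ht) 2)
  set E : ℝ → ℝ := fun t => 16 * Real.log (y t) - 8 * Real.log (x t ^ 2 + y t ^ 2) with hE
  have hEderiv : ∀ t ∈ uIcc (0:ℝ) T,
      HasDerivAt E ((8 * x t / (x t ^ 2 + y t ^ 2)) ^ 2) t := by
    intro t ht
    rw [huIcc] at ht
    have hyne : y t ≠ 0 := (hypos t ht).ne'
    have hrne : x t ^ 2 + y t ^ 2 ≠ 0 := (hr t ht).ne'
    have h1 : HasDerivAt (fun s => Real.log (y s))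
        ((-2 * y t / (x t ^ 2 + y t ^ 2)) / y t) t := (hy t ht).log hyne
    have h2 : HasDerivAt (fun s => x s ^ 2 + y s ^ 2)
        ((2:ℕ) * x t ^ 1 * (-6 * x t / (x t ^ 2 + y t ^ 2)) +
         (2:ℕ) * y t ^ 1 * (-2 * y t / (x t ^ 2 + y t ^ 2))) t :=
      ((hx t ht).pow 2).add ((hy t ht).pow 2)
    have h3 : HasDerivAt (fun s => Real.log (x s ^ 2 + y s ^ 2))
        (((2:ℕ) * x t ^ 1 * (-6 * x t / (x t ^ 2 + y t ^ 2)) +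
          (2:ℕ) * y t ^ 1 * (-2 * y t / (x t ^ 2 + y t ^ 2))) / (x t ^ 2 + y t ^ 2)) t :=
      h2.log hrne
    have h4 := (h1.const_mul (16:ℝ)).sub (h3.const_mul (8:ℝ))
    refine h4.congr_deriv ?_
    field_simp
    ring
  have hcont : ContinuousOn (fun t => (8 * x t / (x t ^ 2 + y t ^ 2)) ^ 2) (uIcc (0:ℝ) T) := by
    rw [huIcc]
    intro t ht
    have hrne : x t ^ 2 + y t ^ 2 ≠ 0 := (hr t ht).ne'
    refine ContinuousAt.continuousWithinAt ?_
    exact ContinuousAt.pow (ContinuousAt.div ((hx t ht).continuousAt.const_mul 8)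
      (((hx t ht).continuousAt.pow 2).add ((hy t ht).continuousAt.pow 2)) hrne) 2
  have hInt : IntervalIntegrable (fun t => (8 * x t / (x t ^ 2 + y t ^ 2)) ^ 2)
      MeasureTheory.volume 0 T := hcont.intervalIntegrable
  have hFTC : ∫ t in (0:ℝ)..T, (8 * x t / (x t ^ 2 + y t ^ 2)) ^ 2 = E T - E 0 :=
    intervalIntegral.integral_eq_sub_of_hasDerivAt hEderiv hInt
  have hcongr : (∫ t in (0:ℝ)..T, (deriv lam t) ^ 2) =
      ∫ t in (0:ℝ)..T, (8 * x t / (x t ^ 2 + y t ^ 2)) ^ 2 := by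
    apply intervalIntegral.integral_congr
    intro t ht
    rw [huIcc] at ht
    simp only [(hlam t ht).deriv]
  have hlog : ∀ t ∈ Icc (0:ℝ) T,
      8 * Real.log (y t / Real.sqrt (x t ^ 2 + y t ^ 2)) = (1/2) * E t := by
    intro t ht
    have hyne : y t ≠ 0 := (hypos t ht).ne'
    have hrpos := hr t ht
    have hsne : Real.sqrt (x t ^ 2 + y t ^ 2) ≠ 0 := (Real.sqrt_pos.2 hrpos).ne'
    rw [Real.log_div hyne hsne, Real.log_sqrt hrpos.le, hE]
    ring
  have hmain : (1/2) * (∫ t in (0:ℝ)..T, (deriv lam t) ^ 2) =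
      8 * Real.log (y T / Real.sqrt (x T ^ 2 + y T ^ 2)) -
      8 * Real.log (y 0 / Real.sqrt (x 0 ^ 2 + y 0 ^ 2)) := by
    rw [hcongr, hFTC, hlog T hTm, hlog 0 h0T]
    ring
  refine ⟨hmain, ?_⟩
  intro θ hθ hx0 hy0
  have hsθ : 0 < Real.sin θ := Real.sin_pos_of_pos_of_lt_pi hθ.1 hθ.2
  have h0 : x 0 ^ 2 + y 0 ^ 2 = 1 := by rw [hx0, hy0]; exact Real.cos_sq_add_sin_sq θ
  have harg : Real.sin (Complex.arg ((x T : ℂ) + (y T : ℂ) * Complex.I)) =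
      y T / Real.sqrt (x T ^ 2 + y T ^ 2) := by
    rw [Complex.sin_arg]
    simp [Complex.norm_def, Complex.normSq_add_mul_I, sq]
  rw [hmain, harg, h0, Real.sqrt_one, hy0]
  rw [div_one]
  ring
end

section
/- Fix θ ∈ (0, π/2), set b = cos θ / sin³θ and τ = (1/6)·(1 − (1/2)·cos 2θ). Suppose λ, x, y : [0,τ) → ℝ solve the Wang ODE system with λ(0) = 0, x(0) = cos θ, y(0) = sin θ, and y(t) > 0 for all t. Then for every t ∈ [0,τ): x(t) = b·y(t)³, λ(t) = (4/3)·cos θ − (4/3)·x(t), and (b²/6)·y(t)⁶ + (1/2)·y(t)² = −2t + (1/6)·cos²θ + (1/2)·sin²θ. -/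
open Set

private lemma const_on_Ico {τ : ℝ} (f : ℝ → ℝ)
    (hf : ∀ s ∈ Ico (0:ℝ) τ, HasDerivAt f 0 s) :
    ∀ t ∈ Ico (0:ℝ) τ, f t = f 0 := by
  intro t ht
  have hsub : Icc (0:ℝ) t ⊆ Ico 0 τ := Icc_subset_Ico_right ht.2
  have := constant_of_has_deriv_right_zero
    (f := f) (a := 0) (b := t)
    (fun s hs => (hf s (hsub hs)).continuousAt.continuousWithinAt)
    (fun s hs => (hf s (hsub (Ico_subset_Icc_self hs))).hasDerivWithinAt)
  exact this t (right_mem_Icc.mpr ht.1)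

/-- Explicit invariants of the Wang ODE system with initial data
`(λ, x, y)(0) = (0, cos θ, sin θ)`: on `[0,τ)` one has `x = b y³`,
`λ = (4/3)cos θ − (4/3)x`, and `(b²/6) y⁶ + (1/2) y² = −2t + (1/6)cos²θ + (1/2)sin²θ`,
where `b = cos θ / sin³θ` and `τ = (1/6)(1 − (1/2)cos 2θ)`. -/
theorem wang_ode_explicit (θ : ℝ) (hθ : θ ∈ Ioo (0:ℝ) (Real.pi/2))
    (b τ : ℝ) (hb : b = Real.cos θ / Real.sin θ ^ 3)
    (hτ : τ = (1/6) * (1 - (1/2) * Real.cos (2*θ)))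
    (lam x y : ℝ → ℝ)
    (h0 : lam 0 = 0) (hx0 : x 0 = Real.cos θ) (hy0 : y 0 = Real.sin θ)
    (hypos : ∀ t ∈ Ico (0:ℝ) τ, 0 < y t)
    (hlam : ∀ t ∈ Ico (0:ℝ) τ,
      HasDerivAt lam (8 * x t / (x t ^ 2 + y t ^ 2)) t)
    (hx : ∀ t ∈ Ico (0:ℝ) τ,
      HasDerivAt x (-6 * x t / (x t ^ 2 + y t ^ 2)) t)
    (hy : ∀ t ∈ Ico (0:ℝ) τ,
      HasDerivAt y (-2 * y t / (x t ^ 2 + y t ^ 2)) t) :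
    ∀ t ∈ Ico (0:ℝ) τ,
      x t = b * (y t) ^ 3 ∧
      lam t = (4/3) * Real.cos θ - (4/3) * x t ∧
      (b^2/6) * (y t) ^ 6 + (1/2) * (y t) ^ 2 =
        -2*t + (1/6) * Real.cos θ ^ 2 + (1/2) * Real.sin θ ^ 2 := by
  have hsinpos : 0 < Real.sin θ := Real.sin_pos_of_pos_of_lt_pi hθ.1
    (lt_trans hθ.2 (by linarith [Real.pi_pos]))
  have hsinne : Real.sin θ ≠ 0 := ne_of_gt hsinpos
  have hSpos : ∀ s ∈ Ico (0:ℝ) τ, 0 < x s ^ 2 + y s ^ 2 := by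
    intro s hs
    have := hypos s hs
    nlinarith [sq_nonneg (x s)]
  -- Step 1: x / y^3 is constant, hence x = b y^3.
  have hg : ∀ s ∈ Ico (0:ℝ) τ, x s / y s ^ 3 = x 0 / y 0 ^ 3 := by
    apply const_on_Ico
    intro s hs
    have hyne : y s ≠ 0 := ne_of_gt (hypos s hs)
    have hSne : x s ^ 2 + y s ^ 2 ≠ 0 := ne_of_gt (hSpos s hs)
    have hy3ne : y s ^ 3 ≠ 0 := pow_ne_zero 3 hyne
    have hd := (hx s hs).div ((hy s hs).pow 3) hy3ne
    refine hd.congr_deriv ?_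
    simp only [Pi.pow_apply]
    field_simp
    ring
  have hxy : ∀ s ∈ Ico (0:ℝ) τ, x s = b * (y s) ^ 3 := by
    intro s hs
    have h := hg s hs
    rw [hx0, hy0] at h
    have hy3ne : y s ^ 3 ≠ 0 := pow_ne_zero 3 (ne_of_gt (hypos s hs))
    field_simp [hb] at h ⊢
    rw [div_eq_iff hy3ne] at h
    rw [hb, mul_div_assoc', eq_div_iff (pow_ne_zero 3 hsinne)]
    linarith [h]
  -- Step 2: lam + (4/3) x is constant.
  have hl : ∀ s ∈ Ico (0:ℝ) τ,
      lam s + (4/3) * x s = lam 0 + (4/3) * x 0 := by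
    apply const_on_Ico
    intro s hs
    have hSne : x s ^ 2 + y s ^ 2 ≠ 0 := ne_of_gt (hSpos s hs)
    have hd := (hlam s hs).add ((hx s hs).const_mul (4/3))
    refine hd.congr_deriv ?_
    field_simp
    ring
  -- Step 3: (b²/6) y⁶ + (1/2) y² + 2t is constant.
  have hh : ∀ s ∈ Ico (0:ℝ) τ,
      (b^2/6) * (y s)^6 + (1/2) * (y s)^2 + 2*s
        = (b^2/6) * (y 0)^6 + (1/2) * (y 0)^2 + 2*0 := by
    apply const_on_Ico (f := fun s => (b^2/6) * (y s)^6 + (1/2) * (y s)^2 + 2*s)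
    intro s hs
    have hyne : y s ≠ 0 := ne_of_gt (hypos s hs)
    have hSne : x s ^ 2 + y s ^ 2 ≠ 0 := ne_of_gt (hSpos s hs)
    have hd := ((((hy s hs).pow 6).const_mul (b^2/6)).add
      (((hy s hs).pow 2).const_mul (1/2))).add
      ((hasDerivAt_id s).const_mul 2)
    refine hd.congr_deriv ?_
    have hxs := hxy s hs
    have hS : x s ^ 2 + y s ^ 2 = b^2 * y s ^ 6 + y s ^ 2 := by
      rw [hxs]; ring
    rw [hS]
    have hSne' : b^2 * y s ^ 6 + y s ^ 2 ≠ 0 := by rw [← hS]; exact hSne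
    field_simp
    ring
  intro t ht
  refine ⟨hxy t ht, ?_, ?_⟩
  · have := hl t ht
    rw [h0, hx0] at this
    linarith
  · have := hh t ht
    rw [hy0] at this
    have hb6 : b^2 * Real.sin θ ^ 6 = Real.cos θ ^ 2 := by
      rw [hb, div_pow, div_mul_eq_mul_div,
        div_eq_iff (pow_ne_zero 2 (pow_ne_zero 3 hsinne))]
      ring
    nlinarith [this]
end

section
/- For θ ∈ (0, π/2) set K(θ) = sin⁶θ/(36·cos²θ) and define ξ_θ(t) = −(4√2/√3)·( cbrt(√(K(θ)+t²) + t) − cbrt(√(K(θ)+t²) − t) )^{3/2} for t ≥ 0, where cbrt denotes the real cube root (and both cube-root arguments are nonnegative). Then for any θ₁, θ₂ ∈ (0, π/2) and any t ≥ 0, with c = (K(θ₂)/K(θ₁))^{1/4}, one has ξ_{θ₂}(t) = c·ξ_{θ₁}(t/c²). In other words, all the functions ξ_θ agree up to the Loewner scaling ξ ↦ c·ξ(·/c²). -/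
open Set

/-- The real (odd) cube root of a real number. -/
noncomputable def cbrt (a : ℝ) : ℝ :=
  if 0 ≤ a then a ^ ((1:ℝ)/3) else -((-a) ^ ((1:ℝ)/3))

lemma cbrt_of_nonneg {a : ℝ} (ha : 0 ≤ a) : cbrt a = a ^ ((1:ℝ)/3) := if_pos ha

lemma Kpos {θ : ℝ} (hθ : θ ∈ Ioo (0:ℝ) (Real.pi/2)) :
    0 < Real.sin θ ^ 6 / (36 * Real.cos θ ^ 2) := by
  have hs : 0 < Real.sin θ :=
    Real.sin_pos_of_pos_of_lt_pi hθ.1 (lt_trans hθ.2 (by linarith [Real.pi_pos]))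
  have hc : 0 < Real.cos θ :=
    Real.cos_pos_of_mem_Ioo ⟨by linarith [hθ.1, Real.pi_pos], hθ.2⟩
  positivity

/-- Universality of the Wang upward drivers: for any
`θ₁, θ₂ ∈ (0, π/2)` and `t ≥ 0`, with `c = (K(θ₂)/K(θ₁))^{1/4}`, one has
`ξ_{θ₂}(t) = c · ξ_{θ₁}(t/c²)`, where `K(θ) = sin⁶θ/(36 cos²θ)` and
`ξ_θ(t) = −(4√2/√3)(cbrt(√(K(θ)+t²)+t) − cbrt(√(K(θ)+t²)−t))^{3/2}`. -/
theorem wang_driver_universal (K : ℝ → ℝ)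
    (hK : ∀ θ, K θ = Real.sin θ ^ 6 / (36 * Real.cos θ ^ 2))
    (ξ : ℝ → ℝ → ℝ)
    (hξ : ∀ θ t, ξ θ t = -(4 * Real.sqrt 2 / Real.sqrt 3) *
      (cbrt (Real.sqrt (K θ + t^2) + t) - cbrt (Real.sqrt (K θ + t^2) - t)) ^ ((3:ℝ)/2)) :
    ∀ θ₁ ∈ Ioo (0:ℝ) (Real.pi/2), ∀ θ₂ ∈ Ioo (0:ℝ) (Real.pi/2), ∀ t : ℝ, 0 ≤ t →
      ξ θ₂ t = (K θ₂ / K θ₁) ^ ((1:ℝ)/4) *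
        ξ θ₁ (t / ((K θ₂ / K θ₁) ^ ((1:ℝ)/4)) ^ 2) := by
  intro θ₁ hθ₁ θ₂ hθ₂ t ht
  have hK1 : 0 < K θ₁ := by rw [hK]; exact Kpos hθ₁
  have hK2 : 0 < K θ₂ := by rw [hK]; exact Kpos hθ₂
  set c := (K θ₂ / K θ₁) ^ ((1:ℝ)/4) with hcdef
  have hdiv : 0 < K θ₂ / K θ₁ := div_pos hK2 hK1
  have hcpos : 0 < c := Real.rpow_pos_of_pos hdiv _
  have hc4 : c ^ 4 = K θ₂ / K θ₁ := by
    rw [hcdef, ← Real.rpow_natCast (_ ^ ((1:ℝ)/4)) 4, ← Real.rpow_mul hdiv.le]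
    norm_num
  set s := t / c ^ 2 with hsdef
  have hsnn : 0 ≤ s := div_nonneg ht (by positivity)
  have hts : t = c ^ 2 * s := by
    rw [hsdef, mul_div_assoc', eq_div_iff (pow_pos hcpos 2).ne', mul_comm]
  have hKeq : K θ₂ + t ^ 2 = c ^ 4 * (K θ₁ + s ^ 2) := by
    have h2 : K θ₂ = c ^ 4 * K θ₁ := by rw [hc4]; field_simp
    rw [h2, hts]; ring
  set u := Real.sqrt (K θ₁ + s ^ 2) with hu
  have hunn : 0 ≤ u := Real.sqrt_nonneg _
  have hus : s ≤ u := by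
    calc s = Real.sqrt (s ^ 2) := (Real.sqrt_sq hsnn).symm
    _ ≤ u := Real.sqrt_le_sqrt (by nlinarith)
  have hsqrt : Real.sqrt (K θ₂ + t ^ 2) = c ^ 2 * u := by
    rw [hKeq, show c ^ 4 = (c ^ 2) ^ 2 by ring,
      Real.sqrt_mul (by positivity), Real.sqrt_sq (by positivity), hu]
  have hAnn : 0 ≤ u + s := by linarith
  have hBnn : 0 ≤ u - s := by linarith
  have hc2nn : (0:ℝ) ≤ c ^ 2 := by positivity
  rw [hξ, hξ, hsqrt, hts]
  rw [show c ^ 2 * u + c ^ 2 * s = c ^ 2 * (u + s) by ring,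
      show c ^ 2 * u - c ^ 2 * s = c ^ 2 * (u - s) by ring]
  rw [cbrt_of_nonneg (by positivity), cbrt_of_nonneg (by positivity),
      cbrt_of_nonneg hAnn, cbrt_of_nonneg hBnn,
      Real.mul_rpow hc2nn hAnn, Real.mul_rpow hc2nn hBnn]
  have hD : (0:ℝ) ≤ (u + s) ^ ((1:ℝ)/3) - (u - s) ^ ((1:ℝ)/3) := by
    have := Real.rpow_le_rpow hBnn (by linarith : u - s ≤ u + s) (by norm_num : (0:ℝ) ≤ 1/3)
    linarith
  rw [show (c ^ 2) ^ ((1:ℝ)/3) * (u + s) ^ ((1:ℝ)/3) - (c ^ 2) ^ ((1:ℝ)/3) * (u - s) ^ ((1:ℝ)/3)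
      = (c ^ 2) ^ ((1:ℝ)/3) * ((u + s) ^ ((1:ℝ)/3) - (u - s) ^ ((1:ℝ)/3)) by ring,
    Real.mul_rpow (by positivity) hD, ← Real.rpow_natCast c 2,
    ← Real.rpow_mul hcpos.le, ← Real.rpow_mul hcpos.le]
  norm_num
  ring
end

section
/- Let τ > 0 and let ξ, x, y : [0,τ) → ℝ be differentiable functions solving the EMW ODE system, with x(t) < 0 < y(t) for all t ∈ [0,τ). Then for every t ∈ [0,τ): (y(t)−x(t))² − 2x(t)y(t) = (y(0)−x(0))² − 2x(0)y(0) − 24t, and ξ(t) + (2/3)·(x(t)+y(t)) = ξ(0) + (2/3)·(x(0)+y(0)). -/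
open Set

lemma emw_const_on_Ico (τ : ℝ) (f : ℝ → ℝ)
    (hf : ∀ t ∈ Ico (0:ℝ) τ, HasDerivAt f 0 t) :
    ∀ t ∈ Ico (0:ℝ) τ, f t = f 0 := by
  intro t ht
  obtain ⟨ht0, htτ⟩ := ht
  have hsub : Icc (0:ℝ) t ⊆ Ico (0:ℝ) τ := fun s hs => ⟨hs.1, lt_of_le_of_lt hs.2 htτ⟩
  have := constant_of_has_deriv_right_zero (f := f) (a := 0) (b := t)
    (fun s hs => ((hf s (hsub hs)).continuousAt).continuousWithinAt)
    (fun s hs => ((hf s (hsub ⟨hs.1, hs.2.le⟩)).hasDerivWithinAt))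
  exact this t ⟨ht0, le_refl t⟩

/-- Conservation laws for the EMW ODE system: if `ξ, x, y` solve
`ξ' = −4/x − 4/y`, `x' = 2/x + 4/y`, `y' = 4/x + 2/y` on `[0,τ)` with `x < 0 < y`,
then `(y−x)² − 2xy` decreases linearly at rate 24 and `ξ + (2/3)(x+y)` is constant. -/
theorem emw_ode_conserved (τ : ℝ) (hτ : 0 < τ) (ξ x y : ℝ → ℝ)
    (hxy : ∀ t ∈ Ico (0:ℝ) τ, x t < 0 ∧ 0 < y t)
    (hξ : ∀ t ∈ Ico (0:ℝ) τ, HasDerivAt ξ (-4 / x t - 4 / y t) t)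
    (hx : ∀ t ∈ Ico (0:ℝ) τ, HasDerivAt x (2 / x t + 4 / y t) t)
    (hy : ∀ t ∈ Ico (0:ℝ) τ, HasDerivAt y (4 / x t + 2 / y t) t) :
    ∀ t ∈ Ico (0:ℝ) τ,
      (y t - x t)^2 - 2 * x t * y t = (y 0 - x 0)^2 - 2 * x 0 * y 0 - 24 * t ∧
      ξ t + (2/3) * (x t + y t) = ξ 0 + (2/3) * (x 0 + y 0) := by
  have hF : ∀ t ∈ Ico (0:ℝ) τ,
      HasDerivAt (fun s => (y s - x s)^2 - 2 * x s * y s + 24 * s) 0 t := by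
    intro t ht
    have hxne : x t ≠ 0 := (hxy t ht).1.ne
    have hyne : y t ≠ 0 := (hxy t ht).2.ne'
    have h := ((((hy t ht).sub (hx t ht)).pow 2).sub
        (((hx t ht).const_mul 2).mul (hy t ht))).add ((hasDerivAt_id t).const_mul 24)
    convert h using 1
    case e'_9 =>
      simp only [Pi.sub_apply]
      field_simp
      ring
    all_goals rfl
  have hG : ∀ t ∈ Ico (0:ℝ) τ,
      HasDerivAt (fun s => ξ s + (2/3) * (x s + y s)) 0 t := by
    intro t ht
    have hxne : x t ≠ 0 := (hxy t ht).1.ne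
    have hyne : y t ≠ 0 := (hxy t ht).2.ne'
    have h := (hξ t ht).add (((hx t ht).add (hy t ht)).const_mul (2/3))
    convert h using 1
    case e'_9 =>
      field_simp
      ring
    all_goals rfl
  intro t ht
  have h1 := emw_const_on_Ico τ _ hF t ht
  have h2 := emw_const_on_Ico τ _ hG t ht
  constructor
  · linarith [h1]
  · linarith [h2]
end

section
/- Let T > 0 and let ξ, x, y : [0,T] → ℝ be differentiable functions solving the EMW ODE system, with x(t) < 0 < y(t) for all t ∈ [0,T]. Then the derivative identity d/dt [ 4·log(−x(t)/y(t)) − 8·log((y(t)−x(t))/y(t)) ] = (1/2)·ξ'(t)² holds on [0,T]; consequently (1/2)·∫₀ᵀ ξ'(t)² dt = [ 4·log(−x(T)/y(T)) − 8·log((y(T)−x(T))/y(T)) ] − [ 4·log(−x(0)/y(0)) − 8·log((y(0)−x(0))/y(0)) ]. -/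
open Set

/-- Energy identity for the EMW ODE system: along a solution with
`x < 0 < y`, the function `4 log(−x/y) − 8 log((y−x)/y)` has derivative `(1/2)ξ'(t)²`;
consequently the Loewner energy `(1/2)∫₀ᵀ ξ'(t)² dt` equals the difference of this
function between the endpoints. -/
theorem emw_ode_energy (T : ℝ) (hT : 0 < T) (ξ x y : ℝ → ℝ)
    (hxy : ∀ t ∈ Icc (0:ℝ) T, x t < 0 ∧ 0 < y t)
    (hξ : ∀ t ∈ Icc (0:ℝ) T, HasDerivAt ξ (-4 / x t - 4 / y t) t)
    (hx : ∀ t ∈ Icc (0:ℝ) T, HasDerivAt x (2 / x t + 4 / y t) t)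
    (hy : ∀ t ∈ Icc (0:ℝ) T, HasDerivAt y (4 / x t + 2 / y t) t) :
    (∀ t ∈ Icc (0:ℝ) T,
      HasDerivAt (fun s => 4 * Real.log (-(x s) / y s) - 8 * Real.log ((y s - x s) / y s))
        ((1/2) * (deriv ξ t)^2) t) ∧
    (1/2) * (∫ t in (0:ℝ)..T, (deriv ξ t)^2) =
      (4 * Real.log (-(x T) / y T) - 8 * Real.log ((y T - x T) / y T)) -
      (4 * Real.log (-(x 0) / y 0) - 8 * Real.log ((y 0 - x 0) / y 0)) := by
  have hT' : (0:ℝ) ≤ T := hT.le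
  have key : ∀ t ∈ Icc (0:ℝ) T,
      HasDerivAt (fun s => 4 * Real.log (-(x s) / y s) - 8 * Real.log ((y s - x s) / y s))
        ((1/2) * (deriv ξ t)^2) t := by
    intro t ht
    obtain ⟨hxt, hyt⟩ := hxy t ht
    have hx0 : x t ≠ 0 := ne_of_lt hxt
    have hy0 : y t ≠ 0 := ne_of_gt hyt
    have hyx0 : y t - x t ≠ 0 := ne_of_gt (by linarith)
    have hdx := hx t ht
    have hdy := hy t ht
    have hξd : deriv ξ t = -4 / x t - 4 / y t := (hξ t ht).deriv
    have h1 : HasDerivAt (fun s => -(x s) / y s)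
        (((-(2 / x t + 4 / y t)) * y t - (-(x t)) * (4 / x t + 2 / y t)) / (y t)^2) t :=
      (hdx.neg).div hdy hy0
    have h2 : HasDerivAt (fun s => (y s - x s) / y s)
        ((((4 / x t + 2 / y t) - (2 / x t + 4 / y t)) * y t
          - (y t - x t) * (4 / x t + 2 / y t)) / (y t)^2) t :=
      (hdy.sub hdx).div hdy hy0
    have hq1 : -(x t) / y t ≠ 0 := div_ne_zero (neg_ne_zero.mpr hx0) hy0
    have hq2 : (y t - x t) / y t ≠ 0 := div_ne_zero hyx0 hy0
    have h3 := (h1.log hq1).const_mul (4:ℝ)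
    have h4 := (h2.log hq2).const_mul (8:ℝ)
    have h5 := h3.sub h4
    convert h5 using 1
    case e'_4 => rfl
    case e'_5 => rfl
    case e'_8 => rfl
    rw [hξd]
    field_simp
    ring
  refine ⟨key, ?_⟩
  have hcont : ContinuousOn (fun t => (1/2) * (deriv ξ t)^2) (Icc 0 T) := by
    have hc : ContinuousOn (fun t => (1/2) * ((-4 / x t - 4 / y t))^2) (Icc 0 T) := by
      apply ContinuousOn.mul continuousOn_const
      apply ContinuousOn.pow
      exact ContinuousOn.sub
        (ContinuousOn.div continuousOn_const
          (fun t ht => (hx t ht).continuousAt.continuousWithinAt)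
          (fun t ht => (hxy t ht).1.ne))
        (ContinuousOn.div continuousOn_const
          (fun t ht => (hy t ht).continuousAt.continuousWithinAt)
          (fun t ht => (hxy t ht).2.ne'))
    exact hc.congr (fun t ht => by rw [(hξ t ht).deriv])
  have hint : IntervalIntegrable (fun t => (1/2) * (deriv ξ t)^2)
      MeasureTheory.volume 0 T := by
    apply ContinuousOn.intervalIntegrable
    rwa [uIcc_of_le hT']
  have hmain := intervalIntegral.integral_eq_sub_of_hasDerivAt
    (f := fun s => 4 * Real.log (-(x s) / y s) - 8 * Real.log ((y s - x s) / y s))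
    (by rw [uIcc_of_le hT']; exact key) hint
  rw [← intervalIntegral.integral_const_mul]
  exact hmain
end

section
/- Let x₀ < 0 < y₀ with −x₀ < y₀. Set C = −(2/3)^{1/3}·(y₀−x₀)²/(y₀+x₀)^{2/3} and τ = (1/24)·(x₀² − 4x₀y₀ + y₀²). For t ∈ [−(32/3)·τ, 0), define μ(t) = C/(3t) − (2/(3t))·Re( ( −C³ − (27/4)·t² − (27/12)·t·i·√(−(8/3)·C³ − 9t²) )^{1/3} ), where (·)^{1/3} is the principal complex cube root and the inner radicand −(8/3)C³ − 9t² is nonnegative for such t. Then for every t in this range, μ(t) > 0 and −(1/2)·μ(t)^{−2} + t·μ(t) = C; equivalently, μ(t) is a root of μ³ − (C/t)·μ² − 1/(2t) = 0. -/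
open Set

private lemma cube_eq_of_pos {a b : ℝ} (ha : 0 < a) (hb : 0 < b) (h : a^3 = b^3) : a = b := by
  apply le_antisymm <;> nlinarith [mul_pos ha hb, sq_nonneg (a-b), sq_nonneg (a+b)]

set_option maxHeartbeats 2000000 in
/-- Cardano-type solution for the EMW driver: with
`C = −(2/3)^{1/3}(y₀−x₀)²/(y₀+x₀)^{2/3}` and `τ = (1/24)(x₀²−4x₀y₀+y₀²)`, the function
`μ(t) = C/(3t) − (2/(3t))·Re((−C³ − (27/4)t² − (27/12)·t·i·√(−(8/3)C³−9t²))^{1/3})`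
satisfies, for `t ∈ [−(32/3)τ, 0)`: the inner radicand is nonnegative, `μ(t) > 0`,
`−(1/2)μ(t)^{−2} + tμ(t) = C`, and `μ(t)` is a root of `μ³ − (C/t)μ² − 1/(2t) = 0`. -/
theorem emw_cardano (x₀ y₀ : ℝ) (hx₀ : x₀ < 0) (hy₀ : 0 < y₀) (hxy : -x₀ < y₀)
    (C τ : ℝ)
    (hC : C = -(((2:ℝ)/3) ^ ((1:ℝ)/3) * (y₀ - x₀)^2 / (y₀ + x₀) ^ ((2:ℝ)/3)))
    (hτ : τ = (1/24) * (x₀^2 - 4*x₀*y₀ + y₀^2))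
    (μ : ℝ → ℝ)
    (hμ : ∀ t : ℝ, μ t = C / (3*t) - (2 / (3*t)) *
      ((((-C^3 - (27/4)*t^2 : ℝ) : ℂ) -
        ((27/12)*t : ℝ) * Complex.I * (Real.sqrt (-(8/3)*C^3 - 9*t^2) : ℝ)) ^ ((1:ℂ)/3)).re) :
    ∀ t ∈ Ico (-(32/3)*τ) (0:ℝ),
      0 ≤ -(8/3)*C^3 - 9*t^2 ∧
      0 < μ t ∧
      -(1/2) * ((μ t)^2)⁻¹ + t * μ t = C ∧
      (μ t)^3 - (C/t) * (μ t)^2 - 1/(2*t) = 0 := by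
  have hyx : (0:ℝ) < y₀ + x₀ := by linarith
  have hA : (0:ℝ) < ((2:ℝ)/3) ^ ((1:ℝ)/3) := Real.rpow_pos_of_pos (by norm_num) _
  have hD : (0:ℝ) < (y₀ + x₀) ^ ((2:ℝ)/3) := Real.rpow_pos_of_pos hyx _
  have hB : (0:ℝ) < (y₀ - x₀)^2 := pow_pos (by linarith) 2
  have hCneg : C < 0 := by
    rw [hC, neg_lt_zero]
    exact div_pos (mul_pos hA hB) hD
  have hC3 : C^3 = -(2/3 * ((y₀-x₀)^6 / (y₀+x₀)^2)) := by
    have e : C^3 = -((((2:ℝ)/3) ^ ((1:ℝ)/3))^3 * ((y₀-x₀)^2)^3 / ((y₀+x₀) ^ ((2:ℝ)/3))^3) := by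
      rw [hC]; ring
    have hA3 : ((((2:ℝ)/3) ^ ((1:ℝ)/3)))^3 = 2/3 := by
      rw [← Real.rpow_natCast (((2:ℝ)/3) ^ ((1:ℝ)/3)) 3, ← Real.rpow_mul (by norm_num : (0:ℝ) ≤ 2/3)]
      norm_num
    have hD3 : ((y₀+x₀) ^ ((2:ℝ)/3))^3 = (y₀+x₀)^2 := by
      rw [← Real.rpow_natCast ((y₀+x₀) ^ ((2:ℝ)/3)) 3, ← Real.rpow_mul hyx.le]
      norm_num
    rw [e, hA3, hD3]; ring
  have hy2 : (0:ℝ) < (y₀+x₀)^2 := pow_pos hyx 2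
  have hC3neg : C^3 < 0 := by
    rw [hC3, neg_lt_zero]
    exact mul_pos (by norm_num) (div_pos (pow_pos (by linarith) 6) hy2)
  intro t ht
  obtain ⟨ht1, ht2⟩ := ht
  have htne : t ≠ 0 := ne_of_lt ht2
  have hQ : (0:ℝ) < x₀^2 - 4*x₀*y₀ + y₀^2 := by
    have h1 := mul_pos (neg_pos.2 hx₀) hy₀
    have h2 := sq_nonneg x₀
    have h3 := sq_nonneg y₀
    nlinarith [h1, h2, h3]
  have hτpos : 0 < τ := by rw [hτ]; linarith
  have ht2' : t^2 ≤ ((32/3)*τ)^2 := by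
    nlinarith [mul_nonneg (by linarith : (0:ℝ) ≤ 32/3*τ + t) (by linarith : (0:ℝ) ≤ 32/3*τ - t)]
  have hkey1 : (x₀^2 - 4*x₀*y₀ + y₀^2)*(y₀+x₀) ≤ (y₀-x₀)^3 := by
    linarith [mul_nonneg (sq_nonneg x₀) (by linarith : (0:ℝ) ≤ 3*y₀ - x₀),
      sq_nonneg x₀, mul_pos (mul_pos hB hB) hB]
  have hkey2 : ((x₀^2 - 4*x₀*y₀ + y₀^2)*(y₀+x₀))^2 ≤ ((y₀-x₀)^3)^2 :=
    pow_le_pow_left₀ (mul_nonneg hQ.le hyx.le) hkey1 2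
  have h16 : -(8/3)*C^3 = 16/9 * ((y₀-x₀)^6/(y₀+x₀)^2) := by rw [hC3]; ring
  have h9 : 9*t^2 ≤ 16/9 * ((y₀-x₀)^6/(y₀+x₀)^2) := by
    rw [show (16:ℝ)/9 * ((y₀-x₀)^6/(y₀+x₀)^2) = (16/9*(y₀-x₀)^6)/(y₀+x₀)^2 from by ring,
      le_div_iff₀ hy2]
    have ht3 : t^2 ≤ (16/81)*(x₀^2 - 4*x₀*y₀ + y₀^2)^2 := by
      rw [hτ] at ht2'; nlinarith [ht2']
    linarith [mul_le_mul_of_nonneg_right ht3 hy2.le, hkey2]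
  have hrad : 0 ≤ -(8/3)*C^3 - 9*t^2 := by linarith
  have hμt := hμ t
  set s : ℝ := Real.sqrt (-(8/3)*C^3 - 9*t^2) with hsdef
  have hs0 : 0 ≤ s := Real.sqrt_nonneg _
  have hs2 : s^2 = -(8/3)*C^3 - 9*t^2 := Real.sq_sqrt hrad
  set z : ℂ := (((-C^3 - (27/4)*t^2 : ℝ) : ℂ) - ((27/12)*t : ℝ) * Complex.I * (s : ℂ)) with hzdef
  have hcoords : z.re = -C^3 - 27/4*t^2 ∧ z.im = -(27/12*t*s) := by
    rw [hzdef]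
    constructor <;>
      simp only [Complex.sub_re, Complex.sub_im, Complex.mul_re, Complex.mul_im,
        Complex.ofReal_re, Complex.ofReal_im, Complex.I_re, Complex.I_im] <;> ring
  obtain ⟨hzre, hzim⟩ := hcoords
  have hnormSq : Complex.normSq z = C^6 := by
    rw [Complex.normSq_apply, hzre, hzim]
    linear_combination (729/144 * t^2) * hs2
  have habsz : ‖z‖ = -C^3 := by
    have h1 : (‖z‖)^2 = (-C^3)^2 := by
      rw [Complex.sq_norm, hnormSq]; ring
    have h2 : (‖z‖ - (-C^3)) * (‖z‖ + (-C^3)) = 0 := by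
      linear_combination h1
    rcases mul_eq_zero.1 h2 with h | h
    · linarith
    · linarith [norm_nonneg z]
  have hzne : z ≠ 0 := by
    intro h
    rw [h, norm_zero] at habsz
    linarith
  set w : ℂ := z ^ ((1:ℂ)/3) with hwdef
  have hw3 : w^3 = z := by
    rw [hwdef, show ((1:ℂ)/3) = (((3:ℕ):ℂ))⁻¹ by norm_num]
    exact Complex.cpow_nat_inv_pow z (by norm_num)
  have hwexp : w = Complex.exp (Complex.log z * ((1:ℂ)/3)) :=
    Complex.cpow_def_of_ne_zero hzne _
  have hlre : (Complex.log z * ((1:ℂ)/3)).re = Real.log (-C^3) / 3 := by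
    simp [Complex.mul_re, Complex.log_re, Complex.log_im, habsz]
    ring
  have hlim : (Complex.log z * ((1:ℂ)/3)).im = Complex.arg z / 3 := by
    simp [Complex.mul_im, Complex.log_re, Complex.log_im]
    ring
  have hEpos : (0:ℝ) < Real.exp (Real.log (-C^3) / 3) := Real.exp_pos _
  have hE : Real.exp (Real.log (-C^3) / 3) = -C := by
    apply cube_eq_of_pos hEpos (by linarith)
    rw [← Real.exp_nat_mul]
    push_cast
    rw [show (3:ℝ) * (Real.log (-C^3) / 3) = Real.log (-C^3) by ring,
      Real.exp_log (by linarith)]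
    ring
  have habsw : ‖w‖ = -C := by
    rw [hwexp, Complex.norm_exp, hlre, hE]
  have hcos : (1:ℝ)/2 ≤ Real.cos (Complex.arg z / 3) := by
    have h1 := Complex.neg_pi_lt_arg z
    have h2 := Complex.arg_le_pi z
    have hpi := Real.pi_pos
    have habs : |Complex.arg z / 3| ≤ Real.pi / 3 := by
      rw [abs_le]; constructor <;> [linarith; linarith]
    calc (1:ℝ)/2 = Real.cos (Real.pi/3) := Real.cos_pi_div_three.symm
    _ ≤ Real.cos |Complex.arg z / 3| :=
        Real.cos_le_cos_of_nonneg_of_le_pi (abs_nonneg _) (by linarith) habs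
    _ = Real.cos (Complex.arg z / 3) := Real.cos_abs _
  have hure : w.re = Real.exp (Real.log (-C^3) / 3) * Real.cos (Complex.arg z / 3) := by
    rw [hwexp, Complex.exp_re, hlre, hlim]
  have hu2 : -C/2 ≤ w.re := by
    rw [hure, hE]
    have := mul_le_mul_of_nonneg_left hcos (by linarith : (0:ℝ) ≤ -C)
    linarith
  have huv : w.re^2 + w.im^2 = C^2 := by
    have := Complex.sq_norm w
    rw [habsw, Complex.normSq_apply] at this
    linear_combination -this
  have hkey0 : w.re^3 - 3*w.re*w.im^2 = -C^3 - 27/4*t^2 := by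
    have h := congrArg Complex.re hw3
    rw [hzre] at h
    rw [← h]
    simp [pow_succ, Complex.mul_re, Complex.mul_im]
    ring
  have hkey : 4*w.re^3 - 3*C^2*w.re = -C^3 - 27/4*t^2 := by
    linear_combination hkey0 + 3*w.re*huv
  have hμeq : μ t = (C - 2*w.re)/(3*t) := by rw [hμt]; ring
  have hμpos : 0 < μ t := by
    rw [hμeq]
    exact div_pos_of_neg_of_neg (by linarith) (by linarith)
  have hcubic : (μ t)^3 - (C/t) * (μ t)^2 - 1/(2*t) = 0 := by
    rw [hμeq]
    field_simp
    linear_combination (-4) * hkey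
  have haux : 2*t*(μ t)^3 - 2*C*(μ t)^2 - 1 = 0 := by
    rw [hμeq]
    field_simp
    linear_combination (-4) * hkey
  refine ⟨hrad, hμpos, ?_, hcubic⟩
  have hμne : μ t ≠ 0 := ne_of_gt hμpos
  field_simp
  linear_combination haux
end

section
/- For 0 < t < π/6 define r(t) = −1 + ( (π/3)^{1/3} / √(π/6 + t) ) · 2·Re( ( −√(π/6 + t) + i·√(π/6 − t) )^{1/3} ), where (·)^{1/3} is the principal complex cube root. Then 0 < r(t) < 1 and t = (π/6) · ( (1 − r(t)) / (1 + r(t))³ ) · ( r(t)² + 4·r(t) + 1 ); equivalently, r(t) is a root of r³ + 3r² + 3αr + α = 0 with α = (t − π/6)/(t + π/6). -/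
open Set

/-- Cardano inversion of the time–ratio relation for the universal
EMW curve: for `0 < t < π/6`, the quantity
`r(t) = −1 + ((π/3)^{1/3}/√(π/6+t)) · 2·Re((−√(π/6+t) + i√(π/6−t))^{1/3})`
lies in `(0,1)` and satisfies `t = (π/6)((1−r)/(1+r)³)(r²+4r+1)`; equivalently, `r(t)`
is a root of `r³ + 3r² + 3αr + α = 0` with `α = (t−π/6)/(t+π/6)`. -/
theorem emw_universal_ratio (r : ℝ → ℝ)
    (hr : ∀ t : ℝ, r t = -1 + ((Real.pi/3) ^ ((1:ℝ)/3) / Real.sqrt (Real.pi/6 + t)) *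
      (2 * ((((-Real.sqrt (Real.pi/6 + t) : ℝ) : ℂ) +
        Complex.I * (Real.sqrt (Real.pi/6 - t) : ℝ)) ^ ((1:ℂ)/3)).re)) :
    ∀ t ∈ Ioo (0:ℝ) (Real.pi/6),
      0 < r t ∧ r t < 1 ∧
      t = (Real.pi/6) * ((1 - r t) / (1 + r t)^3) * ((r t)^2 + 4*(r t) + 1) ∧
      (r t)^3 + 3*(r t)^2 + 3*((t - Real.pi/6)/(t + Real.pi/6))*(r t) +
        (t - Real.pi/6)/(t + Real.pi/6) = 0 := by
  intro t ht
  obtain ⟨ht0, ht1⟩ := ht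
  have hπ := Real.pi_pos
  set s : ℝ := Real.pi / 6 with hs
  have hs0 : 0 < s := by positivity
  have hst : 0 < s + t := by linarith
  have hst' : 0 < s - t := by linarith
  set a := Real.sqrt (s + t) with ha
  set b := Real.sqrt (s - t) with hb
  have ha0 : 0 < a := Real.sqrt_pos.mpr hst
  have hb0 : 0 < b := Real.sqrt_pos.mpr hst'
  have ha2 : a ^ 2 = s + t := Real.sq_sqrt hst.le
  have hb2 : b ^ 2 = s - t := Real.sq_sqrt hst'.le
  set K := Real.sqrt (2 * s) with hK
  have hK0 : 0 < K := Real.sqrt_pos.mpr (by linarith)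
  have hK2 : K ^ 2 = 2 * s := Real.sq_sqrt (by linarith)
  set z : ℂ := (↑(-a) : ℂ) + Complex.I * (↑b : ℂ) with hz
  have hzre : z.re = -a := by simp [hz]
  have hzim : z.im = b := by simp [hz]
  have hz0 : z ≠ 0 := by
    intro h
    have : z.im = 0 := by rw [h]; simp
    rw [hzim] at this; linarith
  have habs : ‖z‖ = K := by
    rw [Complex.norm_def, Complex.normSq_apply, hzre, hzim, hK]
    congr 1
    nlinarith [ha2, hb2]
  set θ := Complex.arg z with hθ
  have hθ_le : θ ≤ Real.pi := Complex.arg_le_pi z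
  have hθ_gt : -Real.pi < θ := Complex.neg_pi_lt_arg z
  have hsinθ : Real.sin θ = b / K := by rw [hθ, Complex.sin_arg, hzim, habs]
  have hsinpos : 0 < Real.sin θ := by rw [hsinθ]; positivity
  have hθpos : 0 < θ := by
    by_contra h
    push_neg at h
    have := Real.sin_nonpos_of_nonpos_of_neg_pi_le h hθ_gt.le
    linarith
  have hθlt : θ < Real.pi := by
    rcases lt_or_eq_of_le hθ_le with h | h
    · exact h
    · rw [h, Real.sin_pi] at hsinpos; linarith
  have hcosθ : Real.cos θ = -a / K := by
    rw [hθ, Complex.cos_arg hz0, hzre, habs]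
  -- 3π/4 < θ
  have hcos34 : Real.cos (3 * Real.pi / 4) = -(Real.sqrt 2 / 2) := by
    rw [show (3 * Real.pi / 4 : ℝ) = Real.pi - Real.pi / 4 by ring, Real.cos_pi_sub,
      Real.cos_pi_div_four]
  have hsq2 : Real.sqrt 2 ^ 2 = 2 := Real.sq_sqrt (by norm_num)
  have hsq2pos : 0 < Real.sqrt 2 := Real.sqrt_pos.mpr (by norm_num)
  have h34 : 3 * Real.pi / 4 < θ := by
    have hlt : Real.cos θ < Real.cos (3 * Real.pi / 4) := by
      rw [hcosθ, hcos34]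
      have hsq : (Real.sqrt 2 / 2 * K) ^ 2 < a ^ 2 := by
        rw [ha2]; nlinarith
      have h1 : Real.sqrt 2 / 2 * K < a :=
        lt_of_pow_lt_pow_left₀ 2 ha0.le hsq
      rw [neg_div, neg_lt_neg_iff]
      rw [lt_div_iff₀ hK0]
      linarith
    by_contra h
    push_neg at h
    have := Real.cos_le_cos_of_nonneg_of_le_pi hθpos.le (by linarith) h
    linarith
  set c := Real.cos (θ / 3) with hc
  have hπ3le : θ / 3 ≤ Real.pi := by linarith
  have hc_ub : c < Real.sqrt 2 / 2 := by
    have : Real.cos (θ / 3) < Real.cos (Real.pi / 4) :=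
      Real.strictAntiOn_cos ⟨by positivity, by linarith⟩
        ⟨by linarith, hπ3le⟩ (by linarith)
    rw [Real.cos_pi_div_four] at this
    exact this
  have hc_lb : 1 / 2 < c := by
    have : Real.cos (Real.pi / 3) < Real.cos (θ / 3) :=
      Real.strictAntiOn_cos ⟨by positivity, hπ3le⟩
        ⟨by linarith, by linarith⟩ (by linarith)
    rw [Real.cos_pi_div_three] at this
    exact this
  have hc0 : 0 < c := by linarith
  have hc2l : 1 / 4 < c ^ 2 := by
    have h := pow_lt_pow_left₀ hc_lb (by norm_num : (0:ℝ) ≤ 1/2) (by norm_num : 2 ≠ 0)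
    calc (1:ℝ)/4 = (1/2)^2 := by norm_num
    _ < c ^ 2 := h
  have hc2u : c ^ 2 < 1 / 2 := by
    have h := pow_lt_pow_left₀ hc_ub hc0.le (by norm_num : 2 ≠ 0)
    calc c ^ 2 < (Real.sqrt 2 / 2) ^ 2 := h
    _ = 1/2 := by rw [div_pow, hsq2]; norm_num
  have h3c : Real.cos θ = 4 * c ^ 3 - 3 * c := by
    have h := Real.cos_three_mul (θ / 3)
    rw [show 3 * (θ / 3) = θ by ring] at h
    rw [h, hc]
  -- key relation a = K (3c - 4c³)
  have hkey : a = K * (3 * c - 4 * c ^ 3) := by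
    have h := hcosθ.symm.trans h3c
    field_simp at h
    linarith
  -- compute the real part of the cube root
  have hwre : ((z : ℂ) ^ ((1:ℂ)/3)).re = (Real.pi / 3) ^ ((1:ℝ)/6) * c := by
    rw [Complex.cpow_def_of_ne_zero hz0, Complex.exp_re]
    have hre : (Complex.log z * ((1:ℂ)/3)).re = Real.log K / 3 := by
      simp [Complex.mul_re, Complex.log_re, Complex.log_im, habs]
      ring
    have him : (Complex.log z * ((1:ℂ)/3)).im = θ / 3 := by
      simp [Complex.mul_im, Complex.log_re, Complex.log_im, habs, hθ]
      ring
    rw [hre, him, ← hc]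
    congr 1
    rw [show Real.log K / 3 = Real.log K * (1/3 : ℝ) by ring,
      ← Real.rpow_def_of_pos hK0]
    have hKval : K = (Real.pi / 3) ^ ((1:ℝ)/2) := by
      rw [hK, show (2 : ℝ) * s = Real.pi / 3 by rw [hs]; ring, Real.sqrt_eq_rpow]
    rw [hKval, ← Real.rpow_mul (by positivity)]
    norm_num
  have hrt : r t = -1 + 2 * K * c / a := by
    rw [hr t, ← ha, ← hb, ← hz, hwre]
    have hcomb : (Real.pi / 3) ^ ((1:ℝ)/3) * (Real.pi / 3) ^ ((1:ℝ)/6) = K := by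
      rw [← Real.rpow_add (by positivity)]
      norm_num
      rw [hK, show (2 : ℝ) * s = Real.pi / 3 by rw [hs]; ring, Real.sqrt_eq_rpow]
    rw [← hcomb]
    ring
  clear_value a b K z θ c
  have hau : a * (r t + 1) = 2 * K * c := by
    rw [hrt, show -1 + 2*K*c/a + 1 = 2*K*c/a from by ring, mul_comm,
      div_mul_cancel₀ _ ha0.ne']
  -- bounds: 1 < r t + 1 < 2
  have hub : 2 * K * c < 2 * a := by
    have h1 : 0 < K * c * (1 - 2 * c ^ 2) :=
      mul_pos (mul_pos hK0 hc0) (by linarith)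
    have h2 : 2 * a - 2 * K * c = 4 * (K * c * (1 - 2 * c ^ 2)) := by
      rw [hkey]; ring
    linarith
  have hlb : a < 2 * K * c := by
    have h1 : 0 < K * c * (4 * c ^ 2 - 1) :=
      mul_pos (mul_pos hK0 hc0) (by linarith)
    have h2 : 2 * K * c - a = K * c * (4 * c ^ 2 - 1) := by
      rw [hkey]; ring
    linarith
  have hr0 : 0 < r t := by
    have h1 : a * 1 < a * (r t + 1) := by rw [hau]; linarith
    have := (mul_lt_mul_iff_right₀ ha0).mp h1
    linarith
  have hr1 : r t < 1 := by
    have h1 : a * (r t + 1) < a * 2 := by rw [hau]; linarith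
    have := (mul_lt_mul_iff_right₀ ha0).mp h1
    linarith
  -- cubic relation
  have key0 : a ^ 3 * (a ^ 2 * (r t + 1) ^ 3 - 3 * K ^ 2 * (r t + 1) + 2 * K ^ 2) = 0 := by
    have h8 : (a * (r t + 1)) ^ 3 = (2 * K * c) ^ 3 := by rw [hau]
    linear_combination a ^ 2 * h8 - 3 * K ^ 2 * a ^ 2 * hau + 2 * K ^ 2 * a ^ 2 * hkey
  have key1 : a ^ 2 * (r t + 1) ^ 3 - 3 * K ^ 2 * (r t + 1) + 2 * K ^ 2 = 0 :=
    (mul_eq_zero.mp key0).resolve_left (pow_ne_zero 3 ha0.ne')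
  have key2 : (s + t) * (r t + 1) ^ 3 - 6 * s * (r t + 1) + 4 * s = 0 := by
    linear_combination key1 - (r t + 1) ^ 3 * ha2 + 3 * (r t + 1) * hK2 - 2 * hK2
  have hne : t + s ≠ 0 := by positivity
  have hiv : (r t)^3 + 3*(r t)^2 + 3*((t - s)/(t + s))*(r t) + (t - s)/(t + s) = 0 := by
    have h9 : (t + s) * ((r t)^3 + 3*(r t)^2 + 3*((t - s)/(t + s))*(r t)
        + (t - s)/(t + s)) = 0 := by
      have hα : (t - s)/(t + s) * (t + s) = t - s := div_mul_cancel₀ _ hne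
      linear_combination key2 + (3 * r t + 1) * hα
    exact (mul_eq_zero.mp h9).resolve_left hne
  have h1r : (0:ℝ) < 1 + r t := by linarith
  have h10 : t * (1 + r t)^3 = s * ((1 - r t) * ((r t)^2 + 4*(r t) + 1)) := by
    linear_combination key2
  have hiii : t = s * ((1 - r t) / (1 + r t)^3) * ((r t)^2 + 4*(r t) + 1) := by
    rw [show s * ((1 - r t) / (1 + r t)^3) * ((r t)^2 + 4*(r t) + 1)
        = s * ((1 - r t) * ((r t)^2 + 4*(r t) + 1)) / (1 + r t)^3 by ring,
      eq_div_iff (pow_ne_zero 3 h1r.ne')]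
    linear_combination h10
  exact ⟨hr0, hr1, hiii, hiv⟩
end

section
/- For 0 ≤ t ≤ 1/8 define γ₁(t) = 1 − √(1−8t) + i·(1−8t)^{1/4}·√(1 − √(1−8t)) ∈ ℂ. Then: (a) |γ₁(t) − 1/2| = 1/2 for all t ∈ [0,1/8], so γ₁ traces the circular arc through 0 and 1 meeting ℝ orthogonally; and (b) for every θ ∈ (0, π/2], evaluating at t(θ) = (1/8)·(1 − sin⁴θ) gives γ₁(t(θ)) = cos θ · (cos θ + i·sin θ), so the tip of the arc at capacity time t(θ) has argument exactly θ. -/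
open Set

/-- The capacity parametrization
`γ₁(t) = 1 − √(1−8t) + i(1−8t)^{1/4}√(1−√(1−8t))` of the orthogonal circular arc:
(a) `|γ₁(t) − 1/2| = 1/2` for all `t ∈ [0,1/8]`; (b) for every `θ ∈ (0, π/2]`,
at `t(θ) = (1/8)(1 − sin⁴θ)` one has `γ₁(t(θ)) = cos θ (cos θ + i sin θ)`, so the tip
has argument exactly `θ`. -/
theorem circular_arc_parametrization (γ₁ : ℝ → ℂ)
    (hγ : ∀ t : ℝ, γ₁ t = ((1 - Real.sqrt (1 - 8*t) : ℝ) : ℂ) +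
      Complex.I * (((1 - 8*t) ^ ((1:ℝ)/4) * Real.sqrt (1 - Real.sqrt (1 - 8*t)) : ℝ) : ℂ)) :
    (∀ t ∈ Icc (0:ℝ) (1/8), ‖γ₁ t - 1/2‖ = 1/2) ∧
    ∀ θ ∈ Ioc (0:ℝ) (Real.pi/2),
      γ₁ ((1/8) * (1 - Real.sin θ ^ 4)) =
        (Real.cos θ : ℂ) * ((Real.cos θ : ℂ) + Complex.I * (Real.sin θ : ℂ)) := by
  constructor
  · intro t ht
    obtain ⟨ht0, ht1⟩ := ht
    have h8 : (0:ℝ) ≤ 1 - 8*t := by linarith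
    set s := Real.sqrt (1 - 8*t) with hs
    have hs0 : 0 ≤ s := Real.sqrt_nonneg _
    have hs2 : s^2 = 1 - 8*t := Real.sq_sqrt h8
    have hs1 : s ≤ 1 := by nlinarith
    have hq : ((1 - 8*t) ^ ((1:ℝ)/4))^2 = s := by
      rw [← Real.rpow_natCast ((1 - 8*t) ^ ((1:ℝ)/4)) 2, ← Real.rpow_mul h8]
      norm_num
      rw [← Real.sqrt_eq_rpow]
    have him : (Real.sqrt (1 - s))^2 = 1 - s := Real.sq_sqrt (by linarith)
    have h12 : (1/2 : ℂ) = ((1/2 : ℝ) : ℂ) := by norm_num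
    have hnorm : ‖γ₁ t - 1/2‖ ^ 2 = (1/2)^2 := by
      have key : (‖γ₁ t - 1/2‖)^2
          = ((1 - s) - 1/2)^2 + ((1 - 8*t) ^ ((1:ℝ)/4) * Real.sqrt (1 - s))^2 := by
        rw [Complex.sq_norm, hγ, h12]
        simp only [Complex.normSq_apply, Complex.add_re, Complex.add_im, Complex.sub_re,
          Complex.sub_im, Complex.ofReal_re, Complex.ofReal_im, Complex.mul_re,
          Complex.mul_im, Complex.I_re, Complex.I_im]
        ring
      rw [key, mul_pow]
      nlinarith [hq, him, hs2]
    have habs : 0 ≤ ‖γ₁ t - 1/2‖ := norm_nonneg _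
    nlinarith [hnorm, habs]
  · intro θ hθ
    obtain ⟨hθ0, hθ1⟩ := hθ
    have hsin : 0 ≤ Real.sin θ := Real.sin_nonneg_of_nonneg_of_le_pi hθ0.le
      (le_trans hθ1 (by linarith [Real.pi_pos]))
    have hcos : 0 ≤ Real.cos θ := Real.cos_nonneg_of_mem_Icc
      ⟨by linarith [Real.pi_pos, hθ0], hθ1⟩
    have h1 : 1 - 8 * ((1/8) * (1 - Real.sin θ ^ 4)) = Real.sin θ ^ 4 := by ring
    have h2 : Real.sqrt (Real.sin θ ^ 4) = Real.sin θ ^ 2 := by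
      rw [show Real.sin θ ^ 4 = (Real.sin θ ^ 2)^2 by ring,
        Real.sqrt_sq (by positivity)]
    have h3 : (Real.sin θ ^ 4) ^ ((1:ℝ)/4) = Real.sin θ := by
      rw [← Real.rpow_natCast (Real.sin θ) 4, ← Real.rpow_mul hsin]
      norm_num
    have h4 : 1 - Real.sin θ ^ 2 = Real.cos θ ^ 2 := by
      have := Real.sin_sq_add_cos_sq θ; linarith
    have h5 : Real.sqrt (Real.cos θ ^ 2) = Real.cos θ := Real.sqrt_sq hcos
    rw [hγ, h1, h2, h3, h4, h5]
    push_cast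
    have h6 : (Real.cos θ : ℂ)^2 + (Real.sin θ : ℂ)^2 = 1 := by
      norm_cast; exact Real.cos_sq_add_sin_sq θ
    ring
end

section
/- For every θ ∈ (0, π/2), (1/2)·∫₀^{(1−sin⁴θ)/8} 36/(1−8s) ds = −9·log(sin θ). Consequently, the Loewner energy used by the orthogonal circular arc to reach the point of argument θ (whose driver λ₁(t) = (3/2)(1−√(1−8t)) satisfies λ₁'(s)² = 36/(1−8s), and which reaches argument θ at time t(θ) = (1−sin⁴θ)/8) is exactly 9/8 times the minimal energy −8·log(sin θ) of the Wang minimizer through the same angle. -/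
open Set

/-- For every `θ ∈ (0, π/2)`,
`(1/2)∫₀^{(1−sin⁴θ)/8} 36/(1−8s) ds = −9 log(sin θ)`; consequently the Loewner energy
of the orthogonal circular arc up to the point of argument `θ` is exactly `9/8` times
the minimal energy `−8 log(sin θ)` of the Wang minimizer through the same angle. -/
theorem circular_arc_energy :
    ∀ θ ∈ Ioo (0:ℝ) (Real.pi/2),
      (1/2) * (∫ s in (0:ℝ)..((1 - Real.sin θ ^ 4)/8), 36 / (1 - 8*s)) =
        -9 * Real.log (Real.sin θ) ∧
      (1/2) * (∫ s in (0:ℝ)..((1 - Real.sin θ ^ 4)/8), 36 / (1 - 8*s)) =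
        (9/8) * (-8 * Real.log (Real.sin θ)) := by
  intro θ hθ
  obtain ⟨h0, h2⟩ := hθ
  have hs : 0 < Real.sin θ := Real.sin_pos_of_pos_of_lt_pi h0 (lt_trans h2 (by linarith [Real.pi_pos]))
  have hs1 : Real.sin θ ≤ 1 := Real.sin_le_one θ
  have hs4 : 0 < Real.sin θ ^ 4 := by positivity
  have hs41 : Real.sin θ ^ 4 ≤ 1 := by
    calc Real.sin θ ^ 4 ≤ 1 ^ 4 := by
          apply pow_le_pow_left₀ (le_of_lt hs) hs1
      _ = 1 := one_pow 4
  set T : ℝ := (1 - Real.sin θ ^ 4)/8 with hT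
  have hT0 : 0 ≤ T := by rw [hT]; linarith
  have hpos : ∀ s ∈ uIcc (0:ℝ) T, 0 < 1 - 8*s := by
    intro s hs'
    rw [uIcc_of_le hT0] at hs'
    obtain ⟨_, hsT⟩ := hs'
    have : 8*s ≤ 8*T := by linarith
    rw [hT] at this
    nlinarith
  have key : (∫ s in (0:ℝ)..T, 36 / (1 - 8*s)) = -18 * Real.log (Real.sin θ) := by
    have hderiv : ∀ s ∈ uIcc (0:ℝ) T,
        HasDerivAt (fun u => -(9/2) * Real.log (1 - 8*u)) (36 / (1 - 8*s)) s := by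
      intro s hs'
      have h1 : HasDerivAt (fun u : ℝ => 1 - 8*u) (-8) s := by
        simpa using ((hasDerivAt_id s).const_mul (8:ℝ)).const_sub 1
      have hne : (1 - 8*s) ≠ 0 := ne_of_gt (hpos s hs')
      have h2 : HasDerivAt (fun u : ℝ => Real.log (1 - 8*u)) (-((1 - 8*s)⁻¹ * 8)) s :=
        by simpa [Function.comp_def] using (Real.hasDerivAt_log hne).comp s h1
      have := h2.const_mul (-(9/2) : ℝ)
      refine this.congr_deriv ?_
      rw [div_eq_mul_inv]
      ring
    have hint : IntervalIntegrable (fun s => 36 / (1 - 8*s)) MeasureTheory.volume 0 T := by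
      apply ContinuousOn.intervalIntegrable
      apply ContinuousOn.div continuousOn_const
      · exact (continuousOn_const.sub (continuousOn_const.mul continuousOn_id))
      · intro s hs'; exact ne_of_gt (hpos s hs')
    rw [intervalIntegral.integral_eq_sub_of_hasDerivAt hderiv hint]
    have h1T : 1 - 8*T = Real.sin θ ^ 4 := by rw [hT]; ring
    rw [h1T]
    simp only [mul_zero, sub_zero, Real.log_one, mul_zero]
    rw [Real.log_pow]
    push_cast
    ring
  constructor <;> rw [key] <;> ring
end

section
/- For 0 ≤ t < 1/8 set x(t) = −1 + √(1−8t) − √(1 − √(1−8t)) and y(t) = −1 + √(1−8t) + √(1 − √(1−8t)). Then for every α ∈ (0, 1/2), at the time t(α) = 1/8 − 2α²(1−α)² one has the welding-ratio identity y(t(α)) / ( y(t(α)) − x(t(α)) ) = α, and moreover (1/2)·∫₀^{t(α)} 36/(1−8s) ds = −(9/2)·log(4α(1−α)). Consequently the orthogonal circular arc uses exactly 9/8 times the minimal energy −4·log(4α(1−α)) needed to weld two boundary points with ratio parameter α. -/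
open Set

/-- Welding endpoints of the orthogonal circular arc: with
`x(t) = −1 + √(1−8t) − √(1−√(1−8t))` and `y(t) = −1 + √(1−8t) + √(1−√(1−8t))`, for
every `α ∈ (0,1/2)` and `t(α) = 1/8 − 2α²(1−α)²` one has the welding-ratio identity
`y(t(α))/(y(t(α)) − x(t(α))) = α` and
`(1/2)∫₀^{t(α)} 36/(1−8s) ds = −(9/2)log(4α(1−α))`, which is exactly `9/8` times the
minimal welding energy `−4 log(4α(1−α))`. -/
theorem circular_arc_welding_energy (x y : ℝ → ℝ)
    (hx : ∀ t : ℝ, x t = -1 + Real.sqrt (1 - 8*t) - Real.sqrt (1 - Real.sqrt (1 - 8*t)))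
    (hy : ∀ t : ℝ, y t = -1 + Real.sqrt (1 - 8*t) + Real.sqrt (1 - Real.sqrt (1 - 8*t))) :
    ∀ α ∈ Ioo (0:ℝ) (1/2),
      y (1/8 - 2*α^2*(1-α)^2) / (y (1/8 - 2*α^2*(1-α)^2) - x (1/8 - 2*α^2*(1-α)^2)) = α ∧
      (1/2) * (∫ s in (0:ℝ)..(1/8 - 2*α^2*(1-α)^2), 36 / (1 - 8*s)) =
        -(9/2) * Real.log (4*α*(1-α)) ∧
      (1/2) * (∫ s in (0:ℝ)..(1/8 - 2*α^2*(1-α)^2), 36 / (1 - 8*s)) =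
        (9/8) * (-4 * Real.log (4*α*(1-α))) := by

  intro α hα
  obtain ⟨hα0, hα2⟩ := hα
  set t : ℝ := 1/8 - 2*α^2*(1-α)^2 with ht
  have h8t : 1 - 8*t = (4*α*(1-α))^2 := by rw [ht]; ring
  have hαpos : 0 < 4*α*(1-α) := by nlinarith
  have hs1 : Real.sqrt (1-8*t) = 4*α*(1-α) := by
    rw [h8t, Real.sqrt_sq hαpos.le]
  have hs2 : Real.sqrt (1 - Real.sqrt (1-8*t)) = 1-2*α := by
    rw [hs1, show (1:ℝ) - 4*α*(1-α) = (1-2*α)^2 by ring, Real.sqrt_sq (by linarith)]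
  have h0 : 0 ≤ t := by nlinarith [sq_nonneg (α*(1-α) - 1/4)]
  have hne : (1:ℝ) - 2*α ≠ 0 := by intro h; nlinarith
  constructor
  · rw [hx, hy, hs2, hs1]
    rw [div_eq_iff (by intro h; apply hne; nlinarith [h] : -1 + 4*α*(1-α) + (1-2*α) - (-1 + 4*α*(1-α) - (1-2*α)) ≠ 0)]
    ring
  · have hint : (∫ s in (0:ℝ)..t, 36/(1-8*s)) = -(9/2)*Real.log (1-8*t) - -(9/2)*Real.log (1-8*0) := by
      have key : ∀ s ∈ Set.uIcc (0:ℝ) t,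
          HasDerivAt (fun u => -(9/2)*Real.log (1-8*u)) (36/(1-8*s)) s := by
        intro s hs
        rw [Set.uIcc_of_le h0] at hs
        have hpos : 0 < 1 - 8*s := by
          have h2 := hs.2
          nlinarith [sq_nonneg (4*α*(1-α)), h8t, sq_abs (4*α*(1-α)), mul_pos hαpos hαpos]
        have h1 : HasDerivAt (fun u : ℝ => 1 - 8*u) (-8) s := by
          simpa using ((hasDerivAt_id' s).const_mul (8:ℝ)).const_sub (1:ℝ)
        have h2 := (h1.log hpos.ne').const_mul (-(9/2) : ℝ)
        refine h2.congr_deriv ?_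
        ring
      have hcont : ContinuousOn (fun s => 36/(1-8*s)) (Set.uIcc (0:ℝ) t) := by
        apply ContinuousOn.div continuousOn_const (by fun_prop)
        intro s hs
        rw [Set.uIcc_of_le h0] at hs
        have h2 := hs.2
        have hposT : 0 < 1 - 8*t := by nlinarith [mul_pos hαpos hαpos]
        nlinarith
      exact intervalIntegral.integral_eq_sub_of_hasDerivAt key (hcont.intervalIntegrable)
    have hlog : Real.log (1-8*t) = 2 * Real.log (4*α*(1-α)) := by
      rw [h8t, sq, Real.log_mul hαpos.ne' hαpos.ne']; ring
    have hl1 : Real.log (1-8*0) = 0 := by norm_num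
    exact ⟨by rw [hint, hlog, hl1]; ring, by rw [hint, hlog, hl1]; ring⟩
end

section
/- For 0 < t < 1 set λ(t) = 3√2·(1 − √(1−t)), g₋(t) = √2 − √2·√(1−t) − 2√2·√(1 − √(1−t)), and g₊(t) = √2 − √2·√(1−t) + 2√2·√(1 − √(1−t)). Then λ is differentiable on (0,1) with λ'(t) = 3/(g₋(t) − λ(t)) + 3/(g₊(t) − λ(t)). (This exhibits the orthogonal circular arc, whose driver is λ and whose base prime ends map to g₋(t), g₊(t), as upwards SLE₀(−3,−3).) -/
open Set

/-- The orthogonal circular arc from 0 towards `2√2`, with driver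
`λ(t) = 3√2(1 − √(1−t))` and base prime-end images
`g₋(t) = √2 − √2√(1−t) − 2√2√(1−√(1−t))`, `g₊(t) = √2 − √2√(1−t) + 2√2√(1−√(1−t))`,
is upwards SLE₀(−3,−3): for `t ∈ (0,1)`, `λ` is differentiable at `t` with
`λ'(t) = 3/(g₋(t) − λ(t)) + 3/(g₊(t) − λ(t))`. -/
theorem circular_arc_sle (lam gm gp : ℝ → ℝ)
    (hlam : ∀ t : ℝ, lam t = 3 * Real.sqrt 2 * (1 - Real.sqrt (1 - t)))
    (hgm : ∀ t : ℝ, gm t = Real.sqrt 2 - Real.sqrt 2 * Real.sqrt (1 - t) -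
      2 * Real.sqrt 2 * Real.sqrt (1 - Real.sqrt (1 - t)))
    (hgp : ∀ t : ℝ, gp t = Real.sqrt 2 - Real.sqrt 2 * Real.sqrt (1 - t) +
      2 * Real.sqrt 2 * Real.sqrt (1 - Real.sqrt (1 - t))) :
    ∀ t ∈ Ioo (0:ℝ) 1,
      HasDerivAt lam (3 / (gm t - lam t) + 3 / (gp t - lam t)) t := by
  intro t ht
  obtain ⟨ht0, ht1⟩ := ht
  have h1t : (0:ℝ) < 1 - t := by linarith
  set s := Real.sqrt (1 - t) with hs
  have hspos : 0 < s := Real.sqrt_pos.2 h1t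
  have hs2 : s ^ 2 = 1 - t := Real.sq_sqrt (le_of_lt h1t)
  have hs1 : s < 1 := by nlinarith
  set u := Real.sqrt (1 - s) with hu
  have hupos : 0 < u := Real.sqrt_pos.2 (by linarith)
  have hu2' : u ^ 2 = 1 - s := Real.sq_sqrt (by linarith)
  have hu1 : u < 1 := by nlinarith
  have hu2 : u ^ 2 = 1 - s := Real.sq_sqrt (by linarith)
  have hr : (0:ℝ) < Real.sqrt 2 := Real.sqrt_pos.2 (by norm_num)
  have hr2 : Real.sqrt 2 ^ 2 = 2 := Real.sq_sqrt (by norm_num)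
  -- derivative of inner sqrt
  have hin : HasDerivAt (fun x : ℝ => Real.sqrt (1 - x)) (1 / (2 * s) * (-1)) t := by
    have h1 : HasDerivAt (fun x : ℝ => 1 - x) (-1) t := by
      simpa using (hasDerivAt_id t).const_sub 1
    have h2 : HasDerivAt Real.sqrt (1 / (2 * Real.sqrt (1 - t))) (1 - t) :=
      Real.hasDerivAt_sqrt (ne_of_gt h1t)
    simpa [hs, Function.comp_def] using h2.comp t h1
  have hl : HasDerivAt lam (3 * Real.sqrt 2 * (1 / (2 * s))) t := by
    have h3 : HasDerivAt (fun x : ℝ => 3 * Real.sqrt 2 * (1 - Real.sqrt (1 - x)))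
        (3 * Real.sqrt 2 * (-(1 / (2 * s) * (-1)))) t := (hin.const_sub 1).const_mul _
    have hfun : lam = fun x : ℝ => 3 * Real.sqrt 2 * (1 - Real.sqrt (1 - x)) :=
      funext hlam
    have h4 : HasDerivAt lam (3 * Real.sqrt 2 * (-(1 / (2 * s) * (-1)))) t := by
      rw [hfun]; exact h3
    convert h4 using 1
    ring
  convert hl using 1
  rw [hgm, hgp, hlam]
  rw [← hs, ← hu]
  have e1 : Real.sqrt 2 - Real.sqrt 2 * s - 2 * Real.sqrt 2 * u -
      3 * Real.sqrt 2 * (1 - s) = -(2 * Real.sqrt 2 * (u ^ 2 + u)) := by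
    rw [hu2]; ring
  have e2 : Real.sqrt 2 - Real.sqrt 2 * s + 2 * Real.sqrt 2 * u -
      3 * Real.sqrt 2 * (1 - s) = 2 * Real.sqrt 2 * (u - u ^ 2) := by
    rw [hu2]; ring
  rw [e1, e2]
  have hsu : s = 1 - u ^ 2 := by linarith [hu2]
  rw [hsu]
  have hne1 : -(2 * Real.sqrt 2 * (u ^ 2 + u)) ≠ 0 := by
    have : 0 < u ^ 2 + u := by positivity
    nlinarith
  have hne2 : 2 * Real.sqrt 2 * (u - u ^ 2) ≠ 0 := by
    have : 0 < u - u ^ 2 := by nlinarith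
    positivity
  have hne3 : (1:ℝ) - u ^ 2 ≠ 0 := by nlinarith
  field_simp
  have hne4 : (1:ℝ) - u ≠ 0 := by linarith
  rw [hr2, div_eq_mul_inv]
  linear_combination (u + 1) ^ 2 * mul_inv_cancel₀ hne4
end

section
/- For θ ∈ (0,π), θ ≠ π/2, set x_θ = −√( sin³θ / (sin θ − θ·cos θ) ), y_θ = √( sin³θ / (sin θ + (π−θ)·cos θ) ), and r(θ) = −x_θ / y_θ. Then the limit as θ → π/2 (through values θ ≠ π/2) of the ratio log( 2·√(r(θ)) / (1 + r(θ)) ) / log(sin θ) equals π²/16. Equivalently, the Loewner energy −8·log(2√r/(1+r)) of the energy-minimizing welding curve welding points of ratio r tends to (π/4)² times the energy −8·log(sin θ) of the Wang minimizer welding the same pair of points, as the ratio tends to 1. -/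
open Set Filter

open Topology

lemma aux_alg (L Ls w Q P c s : ℝ) (hw : w ≠ 0) (hQ : Q ≠ 0) (hLs : Ls ≠ 0)
    (hwQ : w * Q = (P * c)^2) (hc2 : c^2 = 1 - s^2) :
    -L / Ls = (-(L / w)) * (P^2 / Q) * (-(1 + s)) * ((s - 1) / Ls) := by
  field_simp
  linear_combination -L * hwQ - L * P^2 * hc2


/-- With `x_θ = −√(sin³θ/(sin θ − θ cos θ))`,
`y_θ = √(sin³θ/(sin θ + (π−θ)cos θ))` and `r(θ) = −x_θ/y_θ`, the ratio
`log(2√(r(θ))/(1+r(θ))) / log(sin θ)` tends to `π²/16` as `θ → π/2` through values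
`θ ≠ π/2`: the EMW energy is asymptotically `(π/4)²` times the Wang energy for curves
welding the same pair of points. -/
theorem emw_wang_energy_ratio_welding (xw yw r : ℝ → ℝ)
    (hx : ∀ θ : ℝ, xw θ = -Real.sqrt (Real.sin θ ^ 3 / (Real.sin θ - θ * Real.cos θ)))
    (hy : ∀ θ : ℝ, yw θ =
      Real.sqrt (Real.sin θ ^ 3 / (Real.sin θ + (Real.pi - θ) * Real.cos θ)))
    (hr : ∀ θ : ℝ, r θ = -(xw θ) / yw θ) :
    Tendsto (fun θ => Real.log (2 * Real.sqrt (r θ) / (1 + r θ)) / Real.log (Real.sin θ))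
      (nhdsWithin (Real.pi/2) {Real.pi/2}ᶜ) (nhds (Real.pi^2 / 16)) := by
  have hl : nhdsWithin (Real.pi/2) {Real.pi/2}ᶜ = 𝓝[≠] (Real.pi/2) := rfl
  rw [hl]
  set l := 𝓝[≠] (Real.pi/2) with hldef
  -- basic continuity limits
  have hsin : Tendsto Real.sin l (𝓝 1) := by
    have := Real.continuous_sin.continuousAt (x := Real.pi/2)
    simpa [ContinuousAt, Real.sin_pi_div_two] using this.mono_left nhdsWithin_le_nhds
  have hcos : Tendsto Real.cos l (𝓝 0) := by
    have := Real.continuous_cos.continuousAt (x := Real.pi/2)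
    simpa [ContinuousAt, Real.cos_pi_div_two] using this.mono_left nhdsWithin_le_nhds
  have hD : Tendsto (fun θ => Real.sin θ - θ * Real.cos θ) l (𝓝 1) := by
    have hc : Continuous fun θ : ℝ => Real.sin θ - θ * Real.cos θ :=
      Real.continuous_sin.sub (continuous_id.mul Real.continuous_cos)
    have := hc.continuousAt (x := Real.pi/2)
    simpa [ContinuousAt, Real.sin_pi_div_two, Real.cos_pi_div_two] using
      this.mono_left nhdsWithin_le_nhds
  have hN : Tendsto (fun θ => Real.sin θ + (Real.pi - θ) * Real.cos θ) l (𝓝 1) := by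
    have hc : Continuous fun θ : ℝ => Real.sin θ + (Real.pi - θ) * Real.cos θ :=
      Real.continuous_sin.add ((continuous_const.sub continuous_id).mul Real.continuous_cos)
    have := hc.continuousAt (x := Real.pi/2)
    simpa [ContinuousAt, Real.sin_pi_div_two, Real.cos_pi_div_two] using
      this.mono_left nhdsWithin_le_nhds
  -- eventual facts
  have hmem : ∀ᶠ θ in l, θ ≠ Real.pi/2 := by
    have := self_mem_nhdsWithin (a := Real.pi/2) (s := {Real.pi/2}ᶜ)
    filter_upwards [this] with θ h using h
  have hball : ∀ᶠ θ in l, |θ - Real.pi/2| < 1 :=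
    (eventually_abs_sub_lt (Real.pi/2) one_pos).filter_mono nhdsWithin_le_nhds
  have hcosne : ∀ᶠ θ in l, Real.cos θ ≠ 0 := by
    filter_upwards [hmem, hball] with θ hne hb
    have hpi : (1:ℝ) < Real.pi := by linarith [Real.pi_gt_three]
    rcases lt_or_gt_of_ne hne with h | h
    · have h1 : 0 < Real.pi/2 - θ := by linarith
      have h2 : Real.pi/2 - θ < Real.pi := by
        have := abs_lt.1 hb; linarith
      have := Real.sin_pos_of_pos_of_lt_pi h1 h2
      rw [Real.sin_pi_div_two_sub] at this
      exact ne_of_gt this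
    · have h1 : 0 < θ - Real.pi/2 := by linarith
      have h2 : θ - Real.pi/2 < Real.pi := by
        have := abs_lt.1 hb; linarith
      have := Real.sin_pos_of_pos_of_lt_pi h1 h2
      have h3 : Real.sin (Real.pi/2 - θ) < 0 := by
        rw [show Real.pi/2 - θ = -(θ - Real.pi/2) by ring, Real.sin_neg]; linarith
      rw [Real.sin_pi_div_two_sub] at h3
      exact ne_of_lt h3
  have hsinpos : ∀ᶠ θ in l, 0 < Real.sin θ := hsin.eventually (eventually_gt_nhds one_pos)
  have hDpos : ∀ᶠ θ in l, 0 < Real.sin θ - θ * Real.cos θ :=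
    hD.eventually (eventually_gt_nhds one_pos)
  have hNpos : ∀ᶠ θ in l, 0 < Real.sin θ + (Real.pi - θ) * Real.cos θ :=
    hN.eventually (eventually_gt_nhds one_pos)
  have hsinlt : ∀ᶠ θ in l, Real.sin θ < 1 := by
    filter_upwards [hcosne] with θ hc
    refine lt_of_le_of_ne (Real.sin_le_one θ) (fun h => hc ?_)
    have h2 := Real.sin_sq_add_cos_sq θ
    nlinarith [Real.sin_sq_add_cos_sq θ]
  -- r θ = sqrt (N/D) eventually
  have hre : ∀ᶠ θ in l, r θ = Real.sqrt
      ((Real.sin θ + (Real.pi - θ) * Real.cos θ) / (Real.sin θ - θ * Real.cos θ)) := by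
    filter_upwards [hsinpos, hDpos, hNpos] with θ hs hD0 hN0
    have ha : (0:ℝ) ≤ Real.sin θ ^ 3 := by positivity
    have ha' : (0:ℝ) < Real.sqrt (Real.sin θ ^ 3) := Real.sqrt_pos.2 (by positivity)
    have hDs : (0:ℝ) < Real.sqrt (Real.sin θ - θ * Real.cos θ) := Real.sqrt_pos.2 hD0
    have hNs : (0:ℝ) < Real.sqrt (Real.sin θ + (Real.pi - θ) * Real.cos θ) := Real.sqrt_pos.2 hN0
    rw [hr, hx, hy, neg_neg, Real.sqrt_div ha, Real.sqrt_div ha, Real.sqrt_div hN0.le]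
    field_simp
  have hND : Tendsto (fun θ =>
      (Real.sin θ + (Real.pi - θ) * Real.cos θ) / (Real.sin θ - θ * Real.cos θ)) l (𝓝 1) := by
    have := hN.div hD one_ne_zero
    simpa [Pi.div_def] using this
  have hrt : Tendsto r l (𝓝 1) := by
    have h1 : Tendsto (fun θ => Real.sqrt
        ((Real.sin θ + (Real.pi - θ) * Real.cos θ) / (Real.sin θ - θ * Real.cos θ))) l (𝓝 1) := by
      have := (Real.continuous_sqrt.continuousAt (x := (1:ℝ))).tendsto.comp hND
      simpa [Function.comp_def] using this
    exact Tendsto.congr' (hre.mono fun _ h => h.symm) h1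
  have hrpos : ∀ᶠ θ in l, 0 < r θ := by
    filter_upwards [hre, hDpos, hNpos] with θ h hD0 hN0
    rw [h]; exact Real.sqrt_pos.2 (div_pos hN0 hD0)
  have hrne1 : ∀ᶠ θ in l, r θ ≠ 1 := by
    filter_upwards [hre, hDpos, hNpos, hcosne] with θ h hD0 hN0 hc
    rw [h, Ne, Real.sqrt_eq_one]
    intro heq
    have : Real.sin θ + (Real.pi - θ) * Real.cos θ = Real.sin θ - θ * Real.cos θ :=
      (div_eq_one_iff_eq hD0.ne').1 heq
    have hπ : Real.pi * Real.cos θ = 0 := by linarith [this]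
    rcases mul_eq_zero.1 hπ with h' | h'
    · exact Real.pi_ne_zero h'
    · exact hc h'
  have hsq : Tendsto (fun θ => Real.sqrt (r θ)) l (𝓝 1) := by
    have := (Real.continuous_sqrt.continuousAt (x := (1:ℝ))).tendsto.comp hrt
    simpa [Function.comp_def] using this
  -- W
  have hWt : Tendsto (fun θ => (1 + r θ) / (2 * Real.sqrt (r θ)) - 1) l (𝓝 0) := by
    have h1 : Tendsto (fun θ => (1 + r θ) / (2 * Real.sqrt (r θ))) l (𝓝 1) := by
      have := ((tendsto_const_nhds (x := (1:ℝ))).add hrt).div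
        ((tendsto_const_nhds (x := (2:ℝ))).mul hsq) (by norm_num)
      simpa [Pi.div_def] using this
    simpa using h1.sub (tendsto_const_nhds (x := (1:ℝ)))
  have hWval : ∀ᶠ θ in l, (1 + r θ) / (2 * Real.sqrt (r θ)) - 1
      = (Real.sqrt (r θ) - 1)^2 / (2 * Real.sqrt (r θ)) := by
    filter_upwards [hrpos] with θ hR0
    have hs0 : (0:ℝ) < Real.sqrt (r θ) := Real.sqrt_pos.2 hR0
    have hsq2 : Real.sqrt (r θ) ^ 2 = r θ := Real.sq_sqrt hR0.le
    have h2u : (2 * Real.sqrt (r θ)) ≠ 0 := by positivity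
    rw [div_sub_one h2u]
    congr 1
    linear_combination -hsq2
  have hWpos : ∀ᶠ θ in l, 0 < (1 + r θ) / (2 * Real.sqrt (r θ)) - 1 := by
    filter_upwards [hWval, hrpos, hrne1] with θ hw hR0 hR1
    have hs0 : (0:ℝ) < Real.sqrt (r θ) := Real.sqrt_pos.2 hR0
    have hs1 : Real.sqrt (r θ) ≠ 1 := fun h => hR1 (Real.sqrt_eq_one.1 h)
    rw [hw]
    refine div_pos ?_ (by positivity)
    exact lt_of_le_of_ne (sq_nonneg _) (Ne.symm (pow_ne_zero 2 (sub_ne_zero.2 hs1)))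
  -- slope lemma
  have hslope : Tendsto (fun y : ℝ => Real.log y / (y - 1)) (𝓝[≠] (1:ℝ)) (𝓝 1) := by
    have h := hasDerivAt_iff_tendsto_slope.1 (Real.hasDerivAt_log one_ne_zero)
    rw [show (1:ℝ)⁻¹ = 1 by norm_num] at h
    exact h.congr (fun y => by rw [slope_def_field, Real.log_one, sub_zero])
  -- T1
  have T1 : Tendsto (fun θ => Real.log (1 + ((1 + r θ) / (2 * Real.sqrt (r θ)) - 1))
      / ((1 + r θ) / (2 * Real.sqrt (r θ)) - 1)) l (𝓝 1) := by
    have hcomp : Tendsto (fun θ => 1 + ((1 + r θ) / (2 * Real.sqrt (r θ)) - 1)) l (𝓝[≠] 1) := by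
      rw [tendsto_nhdsWithin_iff]
      constructor
      · have := (tendsto_const_nhds (x := (1:ℝ))).add hWt
        simpa using this
      · filter_upwards [hWpos] with θ h
        simp only [mem_compl_iff, mem_singleton_iff]
        intro heq; nlinarith
    have := hslope.comp hcomp
    exact this.congr (fun θ => by simp [Function.comp])
  -- T2
  have hsins : Tendsto Real.sin l (𝓝[≠] (1:ℝ)) := by
    rw [tendsto_nhdsWithin_iff]
    refine ⟨hsin, ?_⟩
    filter_upwards [hsinlt] with θ h
    simp only [mem_compl_iff, mem_singleton_iff]
    exact ne_of_lt h
  have T2 : Tendsto (fun θ => (Real.sin θ - 1) / Real.log (Real.sin θ)) l (𝓝 1) := by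
    have := (hslope.comp hsins).inv₀ one_ne_zero
    simp only [Function.comp] at this
    have h2 := this.congr (fun θ => by rw [inv_div])
    simpa using h2
  -- TQ
  have TQ : Tendsto (fun θ => Real.pi^2 / (2 * Real.sqrt (r θ) * (Real.sqrt (r θ) + 1)^2
      * (Real.sin θ - θ * Real.cos θ)^2 * (r θ + 1)^2)) l (𝓝 (Real.pi^2 / 32)) := by
    have hden : Tendsto (fun θ => 2 * Real.sqrt (r θ) * (Real.sqrt (r θ) + 1)^2
        * (Real.sin θ - θ * Real.cos θ)^2 * (r θ + 1)^2) l (𝓝 32) := by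
      have h1 : Tendsto (fun θ => 2 * Real.sqrt (r θ)) l (𝓝 2) := by
        simpa using (tendsto_const_nhds (x := (2:ℝ))).mul hsq
      have h2 : Tendsto (fun θ => (Real.sqrt (r θ) + 1)^2) l (𝓝 4) := by
        have := (hsq.add (tendsto_const_nhds (x := (1:ℝ)))).pow 2
        norm_num at this
        exact this
      have h3 : Tendsto (fun θ => (Real.sin θ - θ * Real.cos θ)^2) l (𝓝 1) := by
        simpa using hD.pow 2
      have h4 : Tendsto (fun θ => (r θ + 1)^2) l (𝓝 4) := by
        have := (hrt.add (tendsto_const_nhds (x := (1:ℝ)))).pow 2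
        norm_num at this
        exact this
      have := ((h1.mul h2).mul h3).mul h4
      norm_num at this
      exact this
    exact (tendsto_const_nhds (x := Real.pi^2)).div hden (by norm_num)
  -- T4
  have T4 : Tendsto (fun θ => -(1 + Real.sin θ)) l (𝓝 (-2)) := by
    have := ((tendsto_const_nhds (x := (1:ℝ))).add hsin).neg
    norm_num at this
    exact this.congr (fun θ => by ring)
  -- assemble G
  have hG : Tendsto (fun θ =>
      (-(Real.log (1 + ((1 + r θ) / (2 * Real.sqrt (r θ)) - 1))
        / ((1 + r θ) / (2 * Real.sqrt (r θ)) - 1)))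
      * (Real.pi^2 / (2 * Real.sqrt (r θ) * (Real.sqrt (r θ) + 1)^2
        * (Real.sin θ - θ * Real.cos θ)^2 * (r θ + 1)^2))
      * (-(1 + Real.sin θ))
      * ((Real.sin θ - 1) / Real.log (Real.sin θ))) l (𝓝 (Real.pi^2 / 16)) := by
    have := ((T1.neg.mul TQ).mul T4).mul T2
    convert this using 2
    ring
  -- final congr
  refine Tendsto.congr' ?_ hG
  filter_upwards [hre, hrpos, hrne1, hsinpos, hsinlt, hDpos, hNpos, hcosne, hWval, hWpos]
    with θ hreθ hR0 hR1 hs0 hs1 hD0 hN0 hc hwv hwp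
  set s := Real.sin θ with hsdef
  set c := Real.cos θ with hcdef
  set R := r θ with hRdef
  set u := Real.sqrt R with hudef
  set D := s - θ * c with hDdef
  set w := (1 + R) / (2 * u) - 1 with hwdef
  have hu0 : 0 < u := Real.sqrt_pos.2 hR0
  have hu2 : u ^ 2 = R := Real.sq_sqrt hR0.le
  have hu1 : u ≠ 1 := fun h => hR1 (by rw [← hu2, h]; norm_num)
  have hlogs : Real.log s ≠ 0 := ne_of_lt (Real.log_neg hs0 hs1)
  have hwne : w ≠ 0 := ne_of_gt hwp
  have hR2 : R ^ 2 * D = s + (Real.pi - θ) * c := by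
    have : R ^ 2 = (s + (Real.pi - θ) * c) / D := by
      rw [hreθ]
      exact Real.sq_sqrt (div_nonneg hN0.le hD0.le)
    rw [this]
    field_simp
  have hkey : (R ^ 2 - 1) * D = Real.pi * c := by
    have : (R ^ 2 - 1) * D = R ^ 2 * D - D := by ring
    rw [this, hR2, hDdef]; ring
  have hc2 : c ^ 2 = 1 - s ^ 2 := by
    have := Real.sin_sq_add_cos_sq θ
    rw [← hsdef, ← hcdef] at this
    linarith
  -- log identity
  have h1w : 1 + w = (1 + R) / (2 * u) := by rw [hwdef]; ring
  have hlognum : Real.log (2 * u / (1 + R)) = -Real.log (1 + w) := by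
    rw [h1w, ← Real.log_inv, inv_div]
  -- wQ identity
  have hwQ : w * (2 * u * (u + 1)^2 * D^2 * (R + 1)^2) = (Real.pi * c)^2 := by
    have h2 : ((R ^ 2 - 1) * D) ^ 2 = (Real.pi * c) ^ 2 := by rw [hkey]
    rw [hwv]
    field_simp
    linear_combination D^2 * (R+1)^2 * (u^2 + R - 2) * hu2 + h2
  -- final algebra
  rw [hlognum]
  have hQne : 2 * u * (u + 1)^2 * D^2 * (R + 1)^2 ≠ 0 := by positivity
  exact (aux_alg (Real.log (1 + w)) (Real.log s) w (2 * u * (u + 1)^2 * D^2 * (R + 1)^2)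
    Real.pi c s hwne hQne hlogs hwQ hc2).symm
end

section
/- For r ∈ (0,1) define β(r) = (3π/4) − (1/2)·arctan( (2(1+r) + (1−r)·log r) / (π·(1−r)) ). Then the limit as r → 1⁻ of the ratio log( 2·√r / (1+r) ) / log( sin(β(r)) ) equals 16/π². Equivalently, the Loewner energy −8·log(2√r/(1+r)) of the energy-minimizing welding curve with welding-endpoint ratio r tends to (4/π)² times the energy −8·log(sin β(r)) of the Wang minimizer with tip of the same argument β(r), as r → 1⁻. -/
open Set Filter

lemma slope_log : Tendsto (fun t : ℝ => Real.log (1+t) / t) (nhdsWithin 0 {0}ᶜ) (nhds 1) := by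
  have h : HasDerivAt (fun t : ℝ => Real.log (1+t)) 1 0 := by
    have := (Real.hasDerivAt_log (by norm_num : (1:ℝ) + 0 ≠ 0)).comp 0
      ((hasDerivAt_id (0:ℝ)).const_add 1)
    simpa [Function.comp_def] using this
  refine (hasDerivAt_iff_tendsto_slope.mp h).congr (fun x => ?_)
  simp [slope_fun_def, div_eq_inv_mul]

lemma slope_sin : Tendsto (fun t : ℝ => Real.sin t / t) (nhdsWithin 0 {0}ᶜ) (nhds 1) := by
  have h : HasDerivAt Real.sin 1 0 := by simpa using Real.hasDerivAt_sin 0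
  refine (hasDerivAt_iff_tendsto_slope.mp h).congr (fun x => ?_)
  simp [slope_fun_def, div_eq_inv_mul]

lemma cos_one_sub (x : ℝ) : Real.cos x = 1 - 2 * Real.sin (x/2)^2 := by
  have h1 : Real.cos x = 2 * Real.cos (x/2)^2 - 1 := by
    have := Real.cos_two_mul (x/2); rw [show 2*(x/2) = x by ring] at this; linarith
  nlinarith [Real.sin_sq_add_cos_sq (x/2)]

lemma tendsto_log_cos :
    Tendsto (fun x : ℝ => Real.log (Real.cos x) / x^2) (nhdsWithin 0 (Ioi 0)) (nhds (-(1/2))) := by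
  have hmem : ∀ᶠ x in nhdsWithin (0:ℝ) (Ioi 0), x ∈ Ioo (0:ℝ) 1 :=
    Ioo_mem_nhdsGT_of_mem ⟨le_refl 0, by norm_num⟩
  have hcosneg : ∀ x : ℝ, x ∈ Ioo (0:ℝ) 1 → Real.cos x - 1 < 0 := by
    intro x hx
    have hs : 0 < Real.sin (x/2) := Real.sin_pos_of_pos_of_lt_pi (by linarith [hx.1])
      (by nlinarith [Real.pi_gt_three, hx.2])
    nlinarith [cos_one_sub x]
  -- (cos x - 1) tends to 0 within {0}ᶜ
  have hc0 : Tendsto (fun x : ℝ => Real.cos x - 1) (nhdsWithin 0 (Ioi 0)) (nhdsWithin 0 {0}ᶜ) := by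
    apply tendsto_nhdsWithin_of_tendsto_nhds_of_eventually_within
    · have : Tendsto (fun x : ℝ => Real.cos x - 1) (nhds 0) (nhds (Real.cos 0 - 1)) :=
        (Real.continuous_cos.tendsto 0).sub tendsto_const_nhds
      simpa using this.mono_left nhdsWithin_le_nhds
    · filter_upwards [hmem] with x hx
      exact (hcosneg x hx).ne
  have h1 : Tendsto (fun x : ℝ => Real.log (1 + (Real.cos x - 1)) / (Real.cos x - 1))
      (nhdsWithin 0 (Ioi 0)) (nhds 1) := slope_log.comp hc0
  have hhalf : Tendsto (fun x : ℝ => x/2) (nhdsWithin 0 (Ioi 0)) (nhdsWithin 0 {0}ᶜ) := by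
    apply tendsto_nhdsWithin_of_tendsto_nhds_of_eventually_within
    · have : Tendsto (fun x : ℝ => x/2) (nhds 0) (nhds (0/2)) :=
        (continuous_id.div_const 2).tendsto (0:ℝ)
      simpa using this.mono_left nhdsWithin_le_nhds
    · filter_upwards [self_mem_nhdsWithin] with x hx
      simp only [mem_compl_iff, mem_singleton_iff]
      have : (0:ℝ) < x := hx
      positivity
  have h2 : Tendsto (fun x : ℝ => -(1/2) * (Real.sin (x/2)/(x/2))^2)
      (nhdsWithin 0 (Ioi 0)) (nhds (-(1/2))) := by
    have := ((slope_sin.comp hhalf).mul (slope_sin.comp hhalf)).const_mul (-(1/2) : ℝ)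
    simpa [sq] using this
  have h2' : Tendsto (fun x : ℝ => (Real.cos x - 1) / x^2)
      (nhdsWithin 0 (Ioi 0)) (nhds (-(1/2))) := by
    refine h2.congr' ?_
    filter_upwards [hmem] with x hx
    have hx0 : x ≠ 0 := ne_of_gt hx.1
    have := cos_one_sub x
    field_simp
    nlinarith [cos_one_sub x]
  have := h1.mul h2'
  rw [one_mul] at this
  refine this.congr' ?_
  filter_upwards [hmem] with x hx
  have hx0 : x ≠ 0 := ne_of_gt hx.1
  rw [show (1:ℝ) + (Real.cos x - 1) = Real.cos x by ring]
  rw [div_mul_div_comm, div_eq_div_iff]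
  · ring
  · exact mul_ne_zero (hcosneg x hx).ne (pow_ne_zero 2 hx0)
  · exact pow_ne_zero 2 hx0

lemma slope_arctan : Tendsto (fun t : ℝ => Real.arctan t / t) (nhdsWithin 0 {0}ᶜ) (nhds 1) := by
  have h : HasDerivAt Real.arctan 1 0 := by simpa using Real.hasDerivAt_arctan 0
  refine (hasDerivAt_iff_tendsto_slope.mp h).congr (fun x => ?_)
  simp [slope_fun_def, div_eq_inv_mul]

lemma emw_num : Tendsto (fun ε : ℝ => Real.log (2*Real.sqrt (1-ε)/(1+(1-ε))) / ε^2)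
    (nhdsWithin 0 (Ioi 0)) (nhds (-(1/8))) := by
  have hmem : ∀ᶠ ε in nhdsWithin (0:ℝ) (Ioi 0), ε ∈ Ioo (0:ℝ) (1/2) :=
    Ioo_mem_nhdsGT_of_mem ⟨le_refl 0, by norm_num⟩
  have key : Tendsto (fun ε : ℝ => ((1/2) * Real.log (1-ε) - Real.log (1-ε/2)) / ε^2)
      (nhdsWithin 0 (Ioi 0)) (nhds (-(1/8))) := by
    apply HasDerivAt.lhopital_zero_nhdsGT
      (f' := fun ε : ℝ => (1/2) * ((1-ε)⁻¹ * (-1)) - (1-ε/2)⁻¹ * (-(1/2)))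
      (g' := fun ε : ℝ => 2*ε)
    · filter_upwards [hmem] with ε hε
      have hne1 : (1:ℝ) - ε ≠ 0 := by have := hε.2; intro h; linarith [hε.1]
      have hne2 : (1:ℝ) - ε/2 ≠ 0 := by have := hε.2; intro h; linarith [hε.1]
      have h1 : HasDerivAt (fun x : ℝ => 1 - x) (-1) ε := by
        simpa using (hasDerivAt_id ε).const_sub 1
      have h2 : HasDerivAt (fun x : ℝ => Real.log (1-x)) ((1-ε)⁻¹ * (-1)) ε :=
        (Real.hasDerivAt_log hne1).comp ε h1
      have h3 : HasDerivAt (fun x : ℝ => 1 - x/2) (-(1/2)) ε := by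
        simpa using ((hasDerivAt_id ε).div_const 2).const_sub 1
      have h4 : HasDerivAt (fun x : ℝ => Real.log (1-x/2)) ((1-ε/2)⁻¹ * (-(1/2))) ε := by
        have := (Real.hasDerivAt_log hne2).comp ε h3; exact this
      exact (h2.const_mul (1/2)).sub h4
    · filter_upwards with ε
      simpa using hasDerivAt_pow 2 ε
    · filter_upwards [self_mem_nhdsWithin] with ε hε
      have : (0:ℝ) < ε := hε
      positivity
    · have c1 : ContinuousAt (fun ε : ℝ => Real.log (1-ε)) 0 := by
        have h : ContinuousAt Real.log (1 - (0:ℝ)) := Real.continuousAt_log (by norm_num)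
        exact h.comp (((continuous_const.sub continuous_id).continuousAt) :
          ContinuousAt (fun ε : ℝ => 1 - ε) 0)
      have c2 : ContinuousAt (fun ε : ℝ => Real.log (1-ε/2)) 0 := by
        have h : ContinuousAt Real.log (1 - (0:ℝ)/2) := Real.continuousAt_log (by norm_num)
        exact ContinuousAt.comp (f := fun ε : ℝ => 1 - ε/2) h
          ((continuous_const.sub (continuous_id.div_const 2)).continuousAt)
      have c3 : ContinuousAt (fun ε : ℝ => (1/2) * Real.log (1-ε) - Real.log (1-ε/2)) 0 :=
        (continuousAt_const.mul c1).sub c2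
      have := c3.tendsto.mono_left (nhdsWithin_le_nhds (s := Ioi (0:ℝ)))
      simpa using this
    · have : Tendsto (fun ε : ℝ => ε^2) (nhds 0) (nhds (0^2)) := (continuous_pow 2).tendsto 0
      simpa using this.mono_left nhdsWithin_le_nhds
    · have hden : Tendsto (fun ε : ℝ => 4*(1-ε)*(2-ε)) (nhdsWithin 0 (Ioi 0))
          (nhds (4*(1-0)*(2-0))) := by
        have hcont : Continuous fun ε : ℝ => 4*(1-ε)*(2-ε) := by continuity
        exact (hcont.tendsto 0).mono_left nhdsWithin_le_nhds
      have base : Tendsto (fun ε : ℝ => (-1)/(4*(1-ε)*(2-ε))) (nhdsWithin 0 (Ioi 0))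
          (nhds ((-1)/(4*(1-0)*(2-0)))) :=
        tendsto_const_nhds.div hden (by norm_num)
      have base' : Tendsto (fun ε : ℝ => (-1)/(4*(1-ε)*(2-ε))) (nhdsWithin 0 (Ioi 0))
          (nhds (-(1/8))) := by convert base using 2; norm_num
      refine base'.congr' ?_
      filter_upwards [hmem] with ε hε
      have hε0 : ε ≠ 0 := ne_of_gt hε.1
      have hne1 : (1:ℝ) - ε ≠ 0 := by have := hε.2; intro h; linarith [hε.1]
      have hne2 : (1:ℝ) - ε/2 ≠ 0 := by have := hε.2; intro h; linarith [hε.1]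
      have hne3 : (2:ℝ) - ε ≠ 0 := by have := hε.2; intro h; linarith [hε.1]
      field_simp
      ring
  refine key.congr' ?_
  filter_upwards [hmem] with ε hε
  have h1ε : (0:ℝ) < 1-ε := by have := hε.2; linarith
  have h2ε : (0:ℝ) < 1-ε/2 := by have := hε.2; linarith
  have hs : Real.sqrt (1-ε) ≠ 0 := (Real.sqrt_ne_zero'.mpr h1ε)
  rw [show (1:ℝ)+(1-ε) = 2*(1-ε/2) by ring,
    Real.log_div (by positivity) (by positivity),
    Real.log_mul two_ne_zero hs, Real.log_mul two_ne_zero (ne_of_gt h2ε),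
    Real.log_sqrt h1ε.le]
  ring


/-- With
`β(r) = 3π/4 − (1/2)·arctan((2(1+r) + (1−r)log r)/(π(1−r)))` (the argument of the tip
of the EMW curve with welding-endpoint ratio `r`), the ratio
`log(2√r/(1+r)) / log(sin β(r))` tends to `16/π²` as `r → 1⁻`: the EMW welding energy
is asymptotically `(4/π)²` times the Wang energy for curves with tip of the same
argument. -/
theorem emw_wang_energy_ratio_tip (β : ℝ → ℝ)
    (hβ : ∀ r : ℝ, β r = 3*Real.pi/4 -
      (1/2) * Real.arctan ((2*(1+r) + (1-r)*Real.log r) / (Real.pi*(1-r)))) :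
    Tendsto (fun r => Real.log (2*Real.sqrt r/(1+r)) / Real.log (Real.sin (β r)))
      (nhdsWithin 1 (Iio 1)) (nhds (16 / Real.pi^2)) := by
  have hπ : (0:ℝ) < Real.pi := Real.pi_pos
  set L := nhdsWithin (0:ℝ) (Ioi 0) with hL
  have hmem : ∀ᶠ ε in L, ε ∈ Ioo (0:ℝ) (1/2) :=
    Ioo_mem_nhdsGT_of_mem ⟨le_refl 0, by norm_num⟩
  have hlog : Tendsto (fun ε : ℝ => Real.log (1-ε)) (nhds 0) (nhds 0) := by
    have h : ContinuousAt Real.log (1 - (0:ℝ)) := Real.continuousAt_log (by norm_num)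
    have h2 := ContinuousAt.comp (f := fun ε : ℝ => 1 - ε) h
      ((continuous_const.sub continuous_id).continuousAt)
    simpa [Function.comp_def] using h2.tendsto
  have hc4 : Tendsto (fun ε : ℝ => 2*(2-ε) + ε * Real.log (1-ε)) L (nhds 4) := by
    have h1 : Tendsto (fun ε : ℝ => 2*(2-ε) + ε * Real.log (1-ε)) (nhds 0)
        (nhds (2*(2-0) + 0*0)) :=
      (tendsto_const_nhds.mul (tendsto_const_nhds.sub tendsto_id)).add (tendsto_id.mul hlog)
    rw [show (2:ℝ)*(2-0) + 0*0 = 4 by norm_num] at h1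
    exact h1.mono_left nhdsWithin_le_nhds
  have hcpos : ∀ᶠ ε in L, 3 < 2*(2-ε) + ε * Real.log (1-ε) :=
    hc4.eventually (eventually_gt_nhds (by norm_num))
  set u : ℝ → ℝ := fun ε => Real.pi * ε / (2*(2-ε) + ε * Real.log (1-ε)) with hu_def
  have hupos : ∀ᶠ ε in L, 0 < u ε := by
    filter_upwards [hmem, hcpos] with ε h1 h2
    exact div_pos (mul_pos hπ h1.1) (by linarith)
  have hu0 : Tendsto u L (nhds 0) := by
    have hnum : Tendsto (fun ε : ℝ => Real.pi * ε) L (nhds 0) := by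
      have h : Tendsto (fun ε : ℝ => Real.pi*ε) (nhds 0) (nhds (Real.pi*0)) :=
        (continuous_const.mul continuous_id).tendsto 0
      simpa using h.mono_left nhdsWithin_le_nhds
    have := hnum.div hc4 (by norm_num)
    rw [zero_div] at this; exact this
  have hu' : Tendsto u L (nhdsWithin 0 {0}ᶜ) :=
    tendsto_nhdsWithin_of_tendsto_nhds_of_eventually_within _ hu0
      (hupos.mono fun ε h => by simp [h.ne'])
  have harc : Tendsto (fun ε => Real.arctan (u ε) / u ε) L (nhds 1) := slope_arctan.comp hu'
  have hπc : Tendsto (fun ε : ℝ => Real.pi / (2*(2-ε) + ε * Real.log (1-ε))) L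
      (nhds (Real.pi/4)) := tendsto_const_nhds.div hc4 (by norm_num)
  have hδε : Tendsto (fun ε : ℝ => ((1/2) * Real.arctan (u ε)) / ε) L (nhds (Real.pi/8)) := by
    have h := (harc.const_mul (1/2:ℝ)).mul hπc
    rw [show (1/2 : ℝ) * 1 * (Real.pi/4) = Real.pi/8 by ring] at h
    refine h.congr' ?_
    filter_upwards [hmem, hcpos] with ε h1 h2
    have hε0 : ε ≠ 0 := ne_of_gt h1.1
    have hc0 : (2*(2-ε) + ε * Real.log (1-ε)) ≠ 0 := by linarith
    simp only [hu_def]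
    field_simp
  have hδpos : ∀ᶠ ε in L, 0 < (1/2) * Real.arctan (u ε) := by
    filter_upwards [hupos] with ε h
    have h2 : 0 < Real.arctan (u ε) := by
      rw [← Real.arctan_zero]; exact Real.arctan_strictMono h
    linarith
  have hδ0 : Tendsto (fun ε => (1/2) * Real.arctan (u ε)) L (nhdsWithin 0 (Ioi 0)) := by
    apply tendsto_nhdsWithin_of_tendsto_nhds_of_eventually_within
    · have h : Tendsto (fun ε => (1/2 : ℝ) * Real.arctan (u ε)) L
          (nhds ((1/2) * Real.arctan 0)) :=
        tendsto_const_nhds.mul ((Real.continuous_arctan.tendsto 0).comp hu0)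
      simpa using h
    · exact hδpos
  have hD : Tendsto (fun ε : ℝ => Real.log (Real.cos ((1/2) * Real.arctan (u ε))) / ε^2) L
      (nhds (-(Real.pi^2/128))) := by
    have h1 := tendsto_log_cos.comp hδ0
    have h := h1.mul (hδε.mul hδε)
    rw [show (-(1/2):ℝ) * (Real.pi/8 * (Real.pi/8)) = -(Real.pi^2/128) by ring] at h
    refine h.congr' ?_
    filter_upwards [hmem, hδpos] with ε h1 h2
    have hε0 : ε ≠ 0 := ne_of_gt h1.1
    have hδne : (1/2) * Real.arctan (u ε) ≠ 0 := ne_of_gt h2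
    simp only [Function.comp_apply]
    have step : Real.log (Real.cos (1/2 * Real.arctan (u ε))) / (1/2 * Real.arctan (u ε))^2 *
        (1/2 * Real.arctan (u ε) / ε * (1/2 * Real.arctan (u ε) / ε)) =
        Real.log (Real.cos (1/2 * Real.arctan (u ε))) *
          ((1/2 * Real.arctan (u ε))^2 / (1/2 * Real.arctan (u ε))^2) / ε^2 := by ring
    rw [step, div_self (pow_ne_zero 2 hδne), mul_one]
  have hmain : Tendsto (fun ε : ℝ => Real.log (2*Real.sqrt (1-ε)/(1+(1-ε))) /
      Real.log (Real.sin (β (1-ε)))) L (nhds (16/Real.pi^2)) := by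
    have h := emw_num.div hD (neg_ne_zero.mpr (by positivity))
    rw [show (-(1/8):ℝ) / (-(Real.pi^2/128)) = 16/Real.pi^2 by
      have h8 : (Real.pi:ℝ)^2 ≠ 0 := by positivity
      rw [neg_div_neg_eq, div_eq_div_iff (by positivity) h8]
      ring] at h
    refine h.congr' ?_
    filter_upwards [hmem, hcpos] with ε h1 h2
    have hε0 : ε ≠ 0 := ne_of_gt h1.1
    have hc0 : (2*(2-ε) + ε * Real.log (1-ε)) ≠ 0 := by linarith
    have hApos : 0 < (2*(2-ε) + ε * Real.log (1-ε)) / (Real.pi*ε) :=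
      div_pos (by linarith) (mul_pos hπ h1.1)
    have hsin : Real.sin (β (1-ε)) = Real.cos ((1/2) * Real.arctan (u ε)) := by
      rw [hβ (1-ε)]
      have harg : (2*(1+(1-ε)) + (1-(1-ε))*Real.log (1-ε)) / (Real.pi*(1-(1-ε)))
          = (2*(2-ε) + ε * Real.log (1-ε)) / (Real.pi*ε) := by
        congr 1 <;> ring
      rw [harg]
      have hinv : Real.arctan (u ε) =
          Real.pi/2 - Real.arctan ((2*(2-ε) + ε*Real.log (1-ε))/(Real.pi*ε)) := by
        rw [← Real.arctan_inv_of_pos hApos]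
        congr 1
        simp only [hu_def]
        rw [inv_div]
      rw [show 3*Real.pi/4 - 1/2 * Real.arctan ((2*(2-ε)+ε*Real.log (1-ε))/(Real.pi*ε))
          = (1/2) * Real.arctan (u ε) + Real.pi/2 by rw [hinv]; ring]
      exact Real.sin_add_pi_div_two _
    rw [hsin]
    simp only [Pi.div_apply]
    exact div_div_div_cancel_right₀ (pow_ne_zero 2 hε0) _ _
  have hcomp : Tendsto (fun r : ℝ => 1 - r) (nhdsWithin 1 (Iio 1)) L := by
    apply tendsto_nhdsWithin_of_tendsto_nhds_of_eventually_within
    · have h : Tendsto (fun r : ℝ => 1 - r) (nhds 1) (nhds (1-1)) :=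
        (continuous_const.sub continuous_id).tendsto 1
      simpa using h.mono_left nhdsWithin_le_nhds
    · filter_upwards [self_mem_nhdsWithin] with r hr
      have : r < 1 := hr
      simp only [mem_Ioi]
      linarith
  have hfin := hmain.comp hcomp
  refine hfin.congr (fun r => ?_)
  simp only [Function.comp_apply, sub_sub_cancel]
end
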